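/- arXiv:1310.6152 — 3 statements merged into one kernel-verified Lean document; each statement's English description precedes it below -/
import Mathlib

section
/- Let G be a connected graph and uv a cut-edge of G that is not a pendant edge (i.e., both u and v have degree at least 2). Let G' be the graph obtained from G by contracting the edge uv to a single vertex u and then attaching a new pendant vertex v to u. Then ϱ(G) > ϱ(G'), where ϱ denotes the distance spectral radius. -/
open SimpleGraph

/-- The distance matrix of a graph: the (i,j)-entry is the graph distance between i and j. -/
noncomputable def distMatrix {V : Type*} [Fintype V] (G : SimpleGraph V) : Matrix V V ℝ :=
  fun i j => (G.dist i j : ℝ)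

/-- The distance spectral radius: the largest eigenvalue of the distance matrix. -/
noncomputable def distSpectralRadius {V : Type*} [Fintype V] (G : SimpleGraph V) : ℝ :=
  sSup {μ : ℝ | ∃ X : V → ℝ, X ≠ 0 ∧ (distMatrix G).mulVec X = μ • X}

/-- The distance Perron vector: the positive unit eigenvector of the distance matrix
corresponding to the distance spectral radius. -/
def IsDistPerronVector {V : Type*} [Fintype V] (G : SimpleGraph V) (X : V → ℝ) : Prop :=
  (∀ v, 0 < X v) ∧ (∑ v, (X v) ^ 2 = 1) ∧
    (distMatrix G).mulVec X = distSpectralRadius G • X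

/-- The graph `G' = G_{uv} + uv`: contract the cut-edge `uv` of `G` to the vertex `u`
(neighbors of `v` become neighbors of `u`) and attach `v` back as a pendant vertex at `u`. -/
def contractPlusPendant {V : Type*} (G : SimpleGraph V) (u v : V) : SimpleGraph V :=
  SimpleGraph.fromRel (fun a b =>
    (a ≠ v ∧ b ≠ v ∧ (G.Adj a b ∨ (a = u ∧ G.Adj v b) ∨ (b = u ∧ G.Adj a v))) ∨
      (a = u ∧ b = v))

set_option linter.unusedSectionVars false
set_option linter.unusedVariables false
set_option linter.unnecessarySimpa false
set_option linter.unusedTactic false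
set_option maxHeartbeats 2000000

open Finset

namespace SpecAux

variable {V : Type*} [Fintype V] [DecidableEq V]
-- assume spec2 content; test incremental pieces with axioms-free: just re-elaborate by including file? simpler: copy file content


noncomputable def toE {V : Type*} [Fintype V] (x : V → ℝ) : EuclideanSpace ℝ V :=
  (WithLp.equiv 2 (V → ℝ)).symm x

noncomputable def TL (M : Matrix V V ℝ) : EuclideanSpace ℝ V →ₗ[ℝ] EuclideanSpace ℝ V where
  toFun x := toE (M.mulVec ((WithLp.equiv 2 (V → ℝ)) x))
  map_add' x y := by simp [toE, Matrix.mulVec_add]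
  map_smul' c x := by simp [toE, Matrix.mulVec_smul]

lemma inner_eq (x y : EuclideanSpace ℝ V) : (inner ℝ x y : ℝ) = ∑ i, x i * y i := by
  simp [PiLp.inner_apply, mul_comm]

lemma TL_apply (M : Matrix V V ℝ) (x : EuclideanSpace ℝ V) (i : V) :
    TL M x i = ∑ j, M i j * x j := by
  show M.mulVec x i = _
  simp [Matrix.mulVec, dotProduct]

lemma inner_TL (M : Matrix V V ℝ) (x y : EuclideanSpace ℝ V) :
    (inner ℝ (TL M x) y : ℝ) = ∑ i, ∑ j, M i j * x j * y i := by
  rw [inner_eq]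
  simp [TL_apply, Finset.sum_mul]

lemma TL_symm {M : Matrix V V ℝ} (hM : ∀ i j, M i j = M j i) :
    (TL M).IsSymmetric := by
  intro x y
  rw [inner_TL]
  rw [inner_eq]
  rw [Finset.sum_comm]
  simp only [TL_apply]
  congr 1; ext i
  rw [Finset.mul_sum]
  congr 1; ext j
  rw [hM j i]; ring

lemma norm_sq_eq (x : EuclideanSpace ℝ V) : ‖x‖ ^ 2 = ∑ i, x i ^ 2 := by
  rw [EuclideanSpace.norm_eq, Real.sq_sqrt (by positivity)]
  simp [sq_abs]

/-- the set of eigenvalues -/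
def eigSet (M : Matrix V V ℝ) : Set ℝ :=
  {μ : ℝ | ∃ X : V → ℝ, X ≠ 0 ∧ M.mulVec X = μ • X}

noncomputable def rho (M : Matrix V V ℝ) : ℝ :=
  ⨆ x : { x : EuclideanSpace ℝ V // x ≠ 0 },
    RCLike.re (inner ℝ (TL M x) (x : EuclideanSpace ℝ V) : ℝ) / ‖(x : EuclideanSpace ℝ V)‖ ^ 2

lemma mem_eigSet {M : Matrix V V ℝ} {μ : ℝ} :
    μ ∈ eigSet M ↔ ∃ x : EuclideanSpace ℝ V, x ≠ 0 ∧ TL M x = μ • x := by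
  constructor
  · rintro ⟨X, hX, hE⟩
    refine ⟨toE X, ?_, ?_⟩
    · simpa [toE] using hX
    · show toE (M.mulVec X) = _
      rw [hE]; rfl
  · rintro ⟨x, hx, hE⟩
    refine ⟨(WithLp.equiv 2 (V → ℝ)) x, by simpa [toE] using hx, ?_⟩
    have := congrArg (WithLp.equiv 2 (V → ℝ)) hE
    exact this

lemma bdd (M : Matrix V V ℝ) :
    BddAbove (Set.range fun x : { x : EuclideanSpace ℝ V // x ≠ 0 } =>
      RCLike.re (inner ℝ (TL M x) (x : EuclideanSpace ℝ V) : ℝ) / ‖(x : EuclideanSpace ℝ V)‖ ^ 2) := by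
  classical
  refine ⟨‖LinearMap.toContinuousLinearMap (TL M)‖, ?_⟩
  rintro r ⟨x, rfl⟩
  have hx : (0:ℝ) < ‖(x : EuclideanSpace ℝ V)‖ := by
    simpa [norm_pos_iff] using x.2
  have h1 : (inner ℝ (TL M x) (x : EuclideanSpace ℝ V) : ℝ) ≤ ‖TL M x‖ * ‖(x : EuclideanSpace ℝ V)‖ :=
    real_inner_le_norm _ _
  have h2 : ‖TL M x‖ ≤ ‖LinearMap.toContinuousLinearMap (TL M)‖ * ‖(x : EuclideanSpace ℝ V)‖ :=
    (LinearMap.toContinuousLinearMap (TL M)).le_opNorm _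
  have h3 : (inner ℝ (TL M x) (x : EuclideanSpace ℝ V) : ℝ)
      ≤ ‖LinearMap.toContinuousLinearMap (TL M)‖ * ‖(x : EuclideanSpace ℝ V)‖ ^ 2 := by
    nlinarith [norm_nonneg (TL M x), norm_nonneg (x : EuclideanSpace ℝ V)]
  show RCLike.re (inner ℝ ((TL M) ↑x) ↑x : ℝ) / ‖(x : EuclideanSpace ℝ V)‖ ^ 2 ≤ _
  rw [RCLike.re_to_real, div_le_iff₀ (by positivity)]
  nlinarith [h3]

lemma rayleigh_le_rho (M : Matrix V V ℝ) {x : EuclideanSpace ℝ V} (hx : x ≠ 0) :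
    (inner ℝ (TL M x) x : ℝ) / ‖x‖ ^ 2 ≤ rho M := by
  have := le_ciSup (bdd M) (⟨x, hx⟩ : { x : EuclideanSpace ℝ V // x ≠ 0 })
  exact this

lemma eig_le_rho {M : Matrix V V ℝ} {μ : ℝ} (h : μ ∈ eigSet M) : μ ≤ rho M := by
  rw [mem_eigSet] at h
  obtain ⟨x, hx, hE⟩ := h
  have hnx : (0:ℝ) < ‖x‖ := by simpa [norm_pos_iff] using hx
  have : (inner ℝ (TL M x) x : ℝ) = μ * ‖x‖ ^ 2 := by
    rw [hE, real_inner_smul_left, real_inner_self_eq_norm_sq]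
  have h2 := rayleigh_le_rho M hx
  rw [this] at h2
  rwa [mul_div_assoc, div_self (by positivity), mul_one] at h2

lemma nontrivialE [Nonempty V] : Nontrivial (EuclideanSpace ℝ V) := by
  obtain ⟨i⟩ := ‹Nonempty V›
  refine ⟨0, toE (fun _ => 1), fun h => ?_⟩
  have := congrFun (congrArg (WithLp.equiv 2 (V → ℝ)) h) i
  simpa [toE] using this

lemma rho_mem [Nonempty V] {M : Matrix V V ℝ} (hM : ∀ i j, M i j = M j i) :
    rho M ∈ eigSet M := by
  haveI := nontrivialE (V := V)
  have h := (TL_symm hM).hasEigenvalue_iSup_of_finiteDimensional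
  obtain ⟨x, hx⟩ := h.exists_hasEigenvector
  rw [mem_eigSet]
  refine ⟨x, hx.2, ?_⟩
  have := hx.apply_eq_smul
  rw [this]
  norm_num [rho]

lemma sSup_eigSet [Nonempty V] {M : Matrix V V ℝ} (hM : ∀ i j, M i j = M j i) :
    sSup (eigSet M) = rho M := by
  apply le_antisymm
  · exact csSup_le ⟨rho M, rho_mem hM⟩ fun μ hμ => eig_le_rho hμ
  · exact le_csSup ⟨rho M, fun μ hμ => eig_le_rho hμ⟩ (rho_mem hM)

/-- quadratic form bound -/
lemma quad_le_sSup [Nonempty V] {M : Matrix V V ℝ} (hM : ∀ i j, M i j = M j i)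
    {Y : V → ℝ} (hY : ∑ i, Y i ^ 2 = 1) :
    ∑ i, (M.mulVec Y) i * Y i ≤ sSup (eigSet M) := by
  rw [sSup_eigSet hM]
  have hY0 : toE Y ≠ 0 := by
    intro h
    rw [show (0 : EuclideanSpace ℝ V) = toE 0 from rfl] at h
    have : Y = 0 := by simpa [toE] using h
    rw [this] at hY; simpa using hY
  have hnorm : ‖toE Y‖ ^ 2 = 1 := by rw [norm_sq_eq]; exact hY
  have h := rayleigh_le_rho M hY0
  rw [hnorm, div_one] at h
  have : (inner ℝ (TL M (toE Y)) (toE Y) : ℝ) = ∑ i, (M.mulVec Y) i * Y i := by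
    rw [inner_eq]
    congr 1
  exact le_trans (le_of_eq this.symm) h

lemma perron [Nonempty V] {M : Matrix V V ℝ} (hM : ∀ i j, M i j = M j i)
    (hnn : ∀ i j, 0 ≤ M i j) (hpos : ∀ i j, i ≠ j → 0 < M i j) (hdiag : ∀ i, M i i = 0)
    (hcard : ∃ i j : V, i ≠ j) :
    ∃ Y : V → ℝ, (∀ i, 0 < Y i) ∧ (∑ i, Y i ^ 2 = 1) ∧
      M.mulVec Y = sSup (eigSet M) • Y ∧ 0 < sSup (eigSet M) := by
  classical
  -- step: rho positive
  obtain ⟨i, j, hij⟩ := hcard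
  have hrho_pos : 0 < rho M := by
    set w : EuclideanSpace ℝ V := toE (fun k => if k = i ∨ k = j then 1 else 0) with hw
    have hwk : ∀ k, w k = if k = i ∨ k = j then 1 else 0 := fun k => rfl
    have hwnn : ∀ k, 0 ≤ w k := by intro k; rw [hwk]; positivity
    have hw0 : w ≠ 0 := by
      intro h
      have := congrFun (congrArg (WithLp.equiv 2 (V → ℝ)) h) i
      simp [hw, toE] at this
    have hnorm : ‖w‖ ^ 2 = 2 := by
      rw [norm_sq_eq]
      have : ∀ k, (w k) ^ 2 = if k = i ∨ k = j then 1 else 0 := by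
        intro k; rw [hwk]; split <;> norm_num
      rw [Finset.sum_congr rfl (fun k _ => this k)]
      rw [Finset.sum_ite, Finset.sum_const_zero, add_zero, Finset.sum_const]
      have hfil : Finset.filter (fun k => k = i ∨ k = j) Finset.univ = {i, j} := by
        ext k; simp [or_comm]
      rw [hfil, Finset.card_insert_of_notMem (by simp [hij]), Finset.card_singleton]
      norm_num
    have hquad : M i j ≤ (inner ℝ (TL M w) w : ℝ) := by
      rw [inner_TL]
      have h1 : M i j * w j * w i ≤ ∑ b, M i b * w b * w i := by
        apply Finset.single_le_sum (f := fun b => M i b * w b * w i) _ (mem_univ j)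
        intro b _
        have := hnn i b
        have := hwnn b
        have := hwnn i
        positivity
      have h2 : (∑ b, M i b * w b * w i) ≤ ∑ a, ∑ b, M a b * w b * w a := by
        apply Finset.single_le_sum (f := fun a => ∑ b, M a b * w b * w a) _ (mem_univ i)
        intro a _
        apply Finset.sum_nonneg
        intro b _
        have := hnn a b
        have := hwnn b
        have := hwnn a
        positivity
      have hwi : w i = 1 := by rw [hwk]; simp
      have hwj : w j = 1 := by rw [hwk]; simp
      calc M i j = M i j * w j * w i := by rw [hwi, hwj]; ring
        _ ≤ _ := le_trans h1 h2
    have hray := rayleigh_le_rho M hw0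
    rw [hnorm] at hray
    have : M i j / 2 ≤ rho M := le_trans (by have := hpos i j hij; linarith [hquad]) hray
    have := hpos i j hij
    linarith
  -- eigenvector for rho
  obtain ⟨X0, hX0ne, hX0eig⟩ := rho_mem (V := V) hM
  set x : EuclideanSpace ℝ V := toE X0 with hxdef
  have hxeig : TL M x = rho M • x := by
    show toE (M.mulVec X0) = _
    rw [hX0eig]; rfl
  have hxne : x ≠ 0 := by
    intro h
    apply hX0ne
    have h2 := congrArg (WithLp.equiv 2 (V → ℝ)) h
    simpa [hxdef, toE] using h2
  have hxnorm : (0:ℝ) < ‖x‖ := by simpa [norm_pos_iff] using hxne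
  set y : EuclideanSpace ℝ V := ‖x‖⁻¹ • x with hydef
  have hyeig : TL M y = rho M • y := by
    rw [hydef, map_smul, hxeig, smul_comm]
  have hynorm : ‖y‖ = 1 := norm_smul_inv_norm hxne
  set z : V → ℝ := fun k => |y k| with hzdef
  set zE : EuclideanSpace ℝ V := toE z with hzEdef
  have hzEk : ∀ k, zE k = |y k| := fun k => rfl
  have hzsum : ∑ k, z k ^ 2 = 1 := by
    have h1 : ∑ k, z k ^ 2 = ∑ k, y k ^ 2 := by
      apply Finset.sum_congr rfl; intro k _; rw [hzdef]; exact sq_abs _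
    rw [h1, ← norm_sq_eq, hynorm]; norm_num
  have hzEnorm : ‖zE‖ ^ 2 = 1 := by rw [norm_sq_eq]; exact hzsum
  have hzEne : zE ≠ 0 := by
    intro h
    have : ‖zE‖ ^ 2 = 0 := by rw [h]; simp
    rw [hzEnorm] at this; norm_num at this
  have hyne : y ≠ 0 := by
    intro h
    rw [h] at hynorm; simp at hynorm
  -- quadratic form of z at least rho
  have hyquad : (inner ℝ (TL M y) y : ℝ) = rho M := by
    rw [hyeig, real_inner_smul_left, real_inner_self_eq_norm_sq, hynorm]; norm_num
  have hzquad_ge : rho M ≤ (inner ℝ (TL M zE) zE : ℝ) := by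
    rw [← hyquad, inner_TL, inner_TL]
    apply Finset.sum_le_sum
    intro a _
    apply Finset.sum_le_sum
    intro b _
    have h1 : y b * y a ≤ |y b * y a| := le_abs_self _
    have h2 : zE b * zE a = |y b * y a| := by rw [hzEk, hzEk, abs_mul]
    have h3 := hnn a b
    calc M a b * y b * y a = M a b * (y b * y a) := by ring
      _ ≤ M a b * (zE b * zE a) := by rw [h2]; exact mul_le_mul_of_nonneg_left h1 h3
      _ = M a b * zE b * zE a := by ring
  have hzquad_le : (inner ℝ (TL M zE) zE : ℝ) ≤ rho M := by
    have := rayleigh_le_rho M hzEne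
    rwa [hzEnorm, div_one] at this
  have hzquad : (inner ℝ (TL M zE) zE : ℝ) = rho M := le_antisymm hzquad_le hzquad_ge
  -- max on sphere
  set Tc := LinearMap.toContinuousLinearMap (TL M) with hTc
  have hTcoe : ∀ (w : EuclideanSpace ℝ V), Tc w = TL M w := fun w => rfl
  have hsa : IsSelfAdjoint Tc := by
    rw [ContinuousLinearMap.isSelfAdjoint_iff_isSymmetric]
    exact TL_symm hM
  have hmax : IsMaxOn Tc.reApplyInnerSelf (Metric.sphere (0 : EuclideanSpace ℝ V) ‖zE‖) zE := by
    intro w hw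
    have hwnorm : ‖w‖ = ‖zE‖ := by simpa using hw
    have hzE1 : ‖zE‖ = 1 := by
      have := hzEnorm
      nlinarith [norm_nonneg zE]
    have hwne : w ≠ 0 := by
      intro h; rw [h] at hwnorm; rw [hzE1] at hwnorm; simp at hwnorm
    have := rayleigh_le_rho M hwne
    rw [hwnorm, hzE1] at this
    norm_num at this
    show Tc.reApplyInnerSelf w ≤ Tc.reApplyInnerSelf zE
    rw [ContinuousLinearMap.reApplyInnerSelf_apply, ContinuousLinearMap.reApplyInnerSelf_apply]
    rw [hTcoe, hTcoe]
    show (inner ℝ (TL M w) w : ℝ) ≤ (inner ℝ (TL M zE) zE : ℝ)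
    rw [hzquad]
    exact this
  have heig := hsa.hasEigenvector_of_isMaxOn hzEne hmax
  have hsup_eq : (⨆ x : { x : EuclideanSpace ℝ V // x ≠ 0 }, Tc.rayleighQuotient x) = rho M := by
    simp only [rho, ContinuousLinearMap.rayleighQuotient,
      ContinuousLinearMap.reApplyInnerSelf_apply]
    rfl
  have hzeig : TL M zE = rho M • zE := by
    have h1 := heig.apply_eq_smul
    rw [hsup_eq] at h1
    exact h1
  -- translate back
  have hmv : M.mulVec z = rho M • z := by
    have := congrArg (WithLp.equiv 2 (V → ℝ)) hzeig
    exact this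
  -- positivity
  have hznn : ∀ k, 0 ≤ z k := fun k => abs_nonneg _
  have hzexists : ∃ k, z k ≠ 0 := by
    by_contra h
    push_neg at h
    apply hzEne
    have : z = 0 := funext h
    rw [hzEdef, this]; rfl
  have hzpos : ∀ k, 0 < z k := by
    intro k
    rcases lt_or_eq_of_le (hznn k) with h | h
    · exact h
    have hk0 : z k = 0 := h.symm
    exfalso
    have hrow : ∑ b, M k b * z b = 0 := by
      have := congrFun hmv k
      have h2 : M.mulVec z k = ∑ b, M k b * z b := by
        simp [Matrix.mulVec, dotProduct]
      rw [h2] at this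
      simp only [Pi.smul_apply, smul_eq_mul] at this
      rw [this, hk0, mul_zero]
    have hall := (Finset.sum_eq_zero_iff_of_nonneg
      (fun b _ => mul_nonneg (hnn k b) (hznn b))).mp hrow
    have : ∀ b, z b = 0 := by
      intro b
      by_cases hbk : b = k
      · rw [hbk]; exact hk0
      · have := hall b (Finset.mem_univ b)
        have hMkb := hpos k b (Ne.symm hbk)
        rcases mul_eq_zero.mp this with h' | h'
        · exact absurd h' (ne_of_gt hMkb)
        · exact h'
    obtain ⟨k', hk'⟩ := hzexists
    exact hk' (this k')
  refine ⟨z, hzpos, hzsum, ?_, ?_⟩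
  · rw [sSup_eigSet hM]; exact hmv
  · rw [sSup_eigSet hM]; exact hrho_pos

/-- potential bound along a walk -/
lemma walk_bound {K : SimpleGraph V} {g : V → ℝ}
    (hg : ∀ ⦃a b⦄, K.Adj a b → g b ≤ g a + 1) :
    ∀ {x y : V} (p : K.Walk x y), g y ≤ g x + p.length := by
  intro x y p
  induction p with
  | nil => simp
  | cons h q ih =>
    have h1 := hg h
    rw [SimpleGraph.Walk.length_cons]
    push_cast
    linarith

lemma dist_bound {K : SimpleGraph V} {g : V → ℝ}
    (hg : ∀ ⦃a b⦄, K.Adj a b → g b ≤ g a + 1) {x y : V} (h : K.Reachable x y) :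
    g y ≤ g x + K.dist x y := by
  obtain ⟨p, hp⟩ := h.exists_walk_length_eq_dist
  have := walk_bound hg p
  rw [hp] at this
  exact this

lemma reach_triangle {K : SimpleGraph V} {x y z : V} (h1 : K.Reachable x y)
    (h2 : K.Reachable y z) : K.dist x z ≤ K.dist x y + K.dist y z := by
  obtain ⟨p, hp⟩ := h1.exists_walk_length_eq_dist
  obtain ⟨q, hq⟩ := h2.exists_walk_length_eq_dist
  rw [← hp, ← hq, ← SimpleGraph.Walk.length_append]
  exact SimpleGraph.dist_le _

lemma dist_anti' {K K' : SimpleGraph V} (h : K ≤ K') {x y : V} (hr : K.Reachable x y) :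
    K'.dist x y ≤ K.dist x y := by
  obtain ⟨p, hp⟩ := hr.exists_walk_length_eq_dist
  rw [← hp, ← SimpleGraph.Walk.length_map (SimpleGraph.Hom.ofLE h)]
  exact SimpleGraph.dist_le _

lemma adj_dist_eq_one {K : SimpleGraph V} {x y : V} (h : K.Adj x y) : K.dist x y = 1 :=
  SimpleGraph.dist_eq_one_iff_adj.mpr h

section Cut
variable {G : SimpleGraph V} {u v : V}

/-- every vertex is in one of the two sides -/
lemma side_total (hG : G.Connected) (x : V) :
    (G.deleteEdges {s(u,v)}).Reachable u x ∨ (G.deleteEdges {s(u,v)}).Reachable v x := by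
  set H := G.deleteEdges {s(u,v)} with hH
  have key : ∀ (z t : V) (p : G.Walk z t), t = u → (H.Reachable z u ∨ H.Reachable z v) := by
    intro z t p
    induction p with
    | nil => rintro rfl; exact Or.inl (SimpleGraph.Reachable.refl _)
    | cons h q ih =>
      rename_i a b _
      intro ht
      by_cases he : s(a, b) = s(u, v)
      · rcases Sym2.eq_iff.mp he with ⟨rfl, rfl⟩ | ⟨rfl, rfl⟩
        · exact Or.inl (SimpleGraph.Reachable.refl _)
        · exact Or.inr (SimpleGraph.Reachable.refl _)
      · have hadj : H.Adj a b := by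
          rw [hH, SimpleGraph.deleteEdges_adj]
          exact ⟨h, by simpa using he⟩
        rcases ih ht with h' | h'
        · exact Or.inl (hadj.reachable.trans h')
        · exact Or.inr (hadj.reachable.trans h')
  obtain ⟨p⟩ := hG.preconnected x u
  rcases key x u p rfl with h | h
  · exact Or.inl h.symm
  · exact Or.inr h.symm

lemma sep_of_not_connected (hG : G.Connected) (huv : G.Adj u v)
    (hcut : ¬ (G.deleteEdges {s(u,v)}).Connected) :
    ¬ (G.deleteEdges {s(u,v)}).Reachable u v := by
  intro hr
  apply hcut
  rw [SimpleGraph.connected_iff]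
  refine ⟨?_, ⟨u⟩⟩
  intro x y
  have hx := side_total (u := u) (v := v) hG x
  have hy := side_total (u := u) (v := v) hG y
  rcases hx with hx | hx <;> rcases hy with hy | hy
  · exact hx.symm.trans hy
  · exact hx.symm.trans (hr.trans hy)
  · exact hx.symm.trans (hr.symm.trans hy)
  · exact hx.symm.trans hy

/-- edge classification -/
lemma edge_classify (hG : G.Connected) (hsep : ¬ (G.deleteEdges {s(u,v)}).Reachable u v)
    {x y : V} (hxy : G.Adj x y) :
    s(x,y) = s(u,v) ∨ ((G.deleteEdges {s(u,v)}).Adj x y ∧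
      (((G.deleteEdges {s(u,v)}).Reachable u x ∧ (G.deleteEdges {s(u,v)}).Reachable u y) ∨
       ((G.deleteEdges {s(u,v)}).Reachable v x ∧ (G.deleteEdges {s(u,v)}).Reachable v y))) := by
  set H := G.deleteEdges {s(u,v)} with hH
  by_cases he : s(x,y) = s(u,v)
  · exact Or.inl he
  · right
    have hadj : H.Adj x y := by
      rw [hH, SimpleGraph.deleteEdges_adj]
      exact ⟨hxy, by simpa using he⟩
    refine ⟨hadj, ?_⟩
    by_cases hx : H.Reachable u x
    · exact Or.inl ⟨hx, hx.trans hadj.reachable⟩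
    · by_cases hxv : H.Reachable v x
      · exact Or.inr ⟨hxv, hxv.trans hadj.reachable⟩
      · rcases side_total (u := u) (v := v) hG x with h | h
        · exact absurd h hx
        · exact absurd h hxv

/-- distance decomposition across the bridge -/
lemma cutDist (hG : G.Connected) (huv : G.Adj u v)
    (hsep : ¬ (G.deleteEdges {s(u,v)}).Reachable u v) {x y : V}
    (hx : (G.deleteEdges {s(u,v)}).Reachable u x) :
    ((G.deleteEdges {s(u,v)}).Reachable u y → G.dist x y = (G.deleteEdges {s(u,v)}).dist x y) ∧
    ((G.deleteEdges {s(u,v)}).Reachable v y →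
      G.dist x y = (G.deleteEdges {s(u,v)}).dist x u + 1 + (G.deleteEdges {s(u,v)}).dist v y) := by
  classical
  set H := G.deleteEdges {s(u,v)} with hH
  have hHle : H ≤ G := SimpleGraph.deleteEdges_le _
  -- the potential function
  set g : V → ℝ := fun w =>
    if H.Reachable u w then (H.dist x w : ℝ) else (H.dist x u : ℝ) + 1 + (H.dist v w : ℝ)
    with hg
  have hAu : H.Reachable u u := SimpleGraph.Reachable.refl u
  have hdisj : ∀ w, H.Reachable u w → H.Reachable v w → False :=
    fun w h1 h2 => hsep (h1.trans h2.symm)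
  have hlip : ∀ ⦃a b⦄, G.Adj a b → g b ≤ g a + 1 := by
    intro a b hab
    rcases edge_classify hG hsep hab with he | ⟨hadj, hcase⟩
    · rcases Sym2.eq_iff.mp he with ⟨rfl, rfl⟩ | ⟨rfl, rfl⟩
      · -- a = u, b = v
        have hBv : ¬ H.Reachable a b := fun h => hdisj b h (SimpleGraph.Reachable.refl b)
        rw [hg]
        simp only [hAu, if_true, hBv, if_false, SimpleGraph.dist_self]
        push_cast
        linarith
      · -- a = v, b = u
        have hBa : ¬ H.Reachable b a := fun h => hdisj a h (SimpleGraph.Reachable.refl a)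
        rw [hg]
        simp only [hAu, if_true, hBa, if_false, SimpleGraph.dist_self]
        push_cast
        have c1 : (0:ℝ) ≤ (H.dist b a : ℝ) := Nat.cast_nonneg _
        have c2 : (0:ℝ) ≤ (H.dist x b : ℝ) := Nat.cast_nonneg _
        linarith
    · have hd1 : H.dist a b = 1 := adj_dist_eq_one hadj
      rcases hcase with ⟨ha, hb⟩ | ⟨ha, hb⟩
      · have hxa : H.Reachable x a := hx.symm.trans ha
        have htri := reach_triangle hxa hadj.reachable
        rw [hd1] at htri
        rw [hg]
        simp only [ha, hb, if_true]
        rw [if_pos hb, if_pos ha]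
        push_cast
        exact_mod_cast htri
      · have hna : ¬ H.Reachable u a := fun h => hdisj a h ha
        have hnb : ¬ H.Reachable u b := fun h => hdisj b h hb
        have htri := reach_triangle ha hadj.reachable
        rw [hd1] at htri
        rw [hg]
        simp only [hna, hnb, if_false]
        push_cast
        have : (H.dist v b : ℝ) ≤ H.dist v a + 1 := by exact_mod_cast htri
        linarith
  have hgx : g x = 0 := by
    rw [hg]; simp only [hx, if_true, SimpleGraph.dist_self, Nat.cast_zero]
  have hbound : ∀ z, g z ≤ G.dist x z := by
    intro z
    have := dist_bound hlip (hG.preconnected x z)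
    rwa [hgx, zero_add] at this
  constructor
  · intro hy
    have h1 : G.dist x y ≤ H.dist x y := dist_anti' hHle (hx.symm.trans hy)
    have h2 := hbound y
    rw [hg] at h2
    simp only [hy, if_true] at h2
    have h2' : H.dist x y ≤ G.dist x y := by exact_mod_cast h2
    omega
  · intro hy
    have hnAy : ¬ H.Reachable u y := fun h => hdisj y h hy
    have h2 := hbound y
    rw [hg] at h2
    simp only [hnAy, if_false] at h2
    have h2' : H.dist x u + 1 + H.dist v y ≤ G.dist x y := by exact_mod_cast h2
    -- upper bound by triangle through the edge
    have t1 : G.dist x y ≤ G.dist x u + G.dist u y := hG.dist_triangle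
    have t2 : G.dist u y ≤ G.dist u v + G.dist v y := hG.dist_triangle
    have h3 : G.dist u v = 1 := adj_dist_eq_one huv
    have h4 : G.dist x u ≤ H.dist x u := dist_anti' hHle (hx.symm.trans hAu)
    have h5 : G.dist v y ≤ H.dist v y := dist_anti' hHle hy
    omega

end Cut

section Prime
variable {G : SimpleGraph V} {u v : V}

def contractPlusPendant' (G : SimpleGraph V) (u v : V) : SimpleGraph V :=
  contractPlusPendant G u v

lemma adj'_v_iff (huv : G.Adj u v) {y : V} :
    (contractPlusPendant' G u v).Adj v y ↔ y = u := by
  have hne : u ≠ v := huv.ne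
  simp only [contractPlusPendant', contractPlusPendant, SimpleGraph.fromRel_adj]
  constructor
  · rintro ⟨hvy, (⟨h1, -⟩ | ⟨h1, -⟩) | ((⟨-, h2, -⟩) | ⟨h1, -⟩)⟩
    · exact absurd rfl h1
    · exact absurd h1 hne.symm
    · exact absurd rfl h2
    · exact h1
  · rintro rfl
    refine ⟨hne.symm, Or.inr (Or.inr ?_)⟩
    simp

lemma adj'_notv {x y : V} (hx : x ≠ v) (hy : y ≠ v) :
    (contractPlusPendant' G u v).Adj x y ↔
      x ≠ y ∧ (G.Adj x y ∨ (x = u ∧ G.Adj v y) ∨ (y = u ∧ G.Adj v x)) := by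
  simp only [contractPlusPendant', contractPlusPendant, SimpleGraph.fromRel_adj]
  constructor
  · rintro ⟨hne, (⟨-, -, h⟩ | ⟨-, h2⟩) | (⟨-, -, h⟩ | ⟨-, h2⟩)⟩
    · refine ⟨hne, ?_⟩
      rcases h with h | ⟨h1, h2⟩ | ⟨h1, h2⟩
      · exact Or.inl h
      · exact Or.inr (Or.inl ⟨h1, h2⟩)
      · exact Or.inr (Or.inr ⟨h1, h2.symm⟩)
    · exact absurd h2 hy
    · refine ⟨hne, ?_⟩
      rcases h with h | ⟨h1, h2⟩ | ⟨h1, h2⟩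
      · exact Or.inl h.symm
      · exact Or.inr (Or.inr ⟨h1, h2⟩)
      · exact Or.inr (Or.inl ⟨h1, h2.symm⟩)
    · exact absurd h2 hx
  · rintro ⟨hne, h | ⟨h1, h2⟩ | ⟨h1, h2⟩⟩
    · exact ⟨hne, Or.inl (Or.inl ⟨hx, hy, Or.inl h⟩)⟩
    · exact ⟨hne, Or.inl (Or.inl ⟨hx, hy, Or.inr (Or.inl ⟨h1, h2⟩)⟩)⟩
    · exact ⟨hne, Or.inl (Or.inl ⟨hx, hy, Or.inr (Or.inr ⟨h1, h2.symm⟩)⟩)⟩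

/-- contraction map -/
def cmap (u v : V) [DecidableEq V] : V → V := fun w => if w = v then u else w

lemma cmap_v [DecidableEq V] : cmap u v v = u := if_pos rfl

lemma cmap_ne [DecidableEq V] {w : V} (h : w ≠ v) : cmap u v w = w := if_neg h

lemma adj'_of_H [DecidableEq V] (huv : G.Adj u v) {x y : V}
    (h : (G.deleteEdges {s(u,v)}).Adj x y) :
    (contractPlusPendant' G u v).Adj (cmap u v x) (cmap u v y) := by
  have hGadj : G.Adj x y := (SimpleGraph.deleteEdges_adj.mp h).1
  have hne : s(x,y) ≠ s(u,v) := by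
    have := (SimpleGraph.deleteEdges_adj.mp h).2
    simpa using this
  have hxy : x ≠ y := hGadj.ne
  by_cases hxv : x = v
  · have hyu : y ≠ u := by
      intro hyu
      apply hne
      rw [hxv, hyu]
      exact Sym2.eq_swap
    have hyv : y ≠ v := by rw [← hxv]; exact hxy.symm
    rw [hxv, cmap_v, cmap_ne hyv]
    rw [adj'_notv (huv.ne) hyv]
    refine ⟨Ne.symm hyu, Or.inr (Or.inl ⟨rfl, ?_⟩)⟩
    rw [← hxv]; exact hGadj
  · by_cases hyv : y = v
    · have hxu : x ≠ u := by
        intro hxu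
        apply hne
        rw [hxu, hyv]
      rw [hyv, cmap_v, cmap_ne hxv]
      rw [adj'_notv hxv huv.ne]
      refine ⟨hxu, Or.inr (Or.inr ⟨rfl, ?_⟩)⟩
      rw [← hyv]; exact hGadj.symm
    · rw [cmap_ne hxv, cmap_ne hyv]
      rw [adj'_notv hxv hyv]
      exact ⟨hxy, Or.inl hGadj⟩

lemma dist'_le_H [DecidableEq V] (huv : G.Adj u v) {x y : V}
    (h : (G.deleteEdges {s(u,v)}).Reachable x y) :
    (contractPlusPendant' G u v).dist (cmap u v x) (cmap u v y)
      ≤ (G.deleteEdges {s(u,v)}).dist x y := by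
  obtain ⟨p, hp⟩ := h.exists_walk_length_eq_dist
  let φ : (G.deleteEdges {s(u,v)}) →g (contractPlusPendant' G u v) :=
    ⟨cmap u v, fun h => adj'_of_H huv h⟩
  rw [← hp, ← SimpleGraph.Walk.length_map φ]
  exact SimpleGraph.dist_le _

lemma conn' [DecidableEq V] (hG : G.Connected) (huv : G.Adj u v) :
    (contractPlusPendant' G u v).Connected := by
  rw [SimpleGraph.connected_iff]
  refine ⟨?_, ⟨u⟩⟩
  have key : ∀ x, (contractPlusPendant' G u v).Reachable u x := by
    intro x
    by_cases hxv : x = v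
    · subst hxv
      exact (SimpleGraph.Adj.reachable (by rw [adj'_v_iff huv])).symm
    · rcases side_total (u := u) (v := v) hG x with h | h
      · have h2 : (contractPlusPendant' G u v).Reachable (cmap u v u) (cmap u v x) := by
          obtain ⟨p⟩ := h
          exact ⟨p.map ⟨cmap u v, fun hh => adj'_of_H huv hh⟩⟩
        rwa [cmap_ne huv.ne, cmap_ne hxv] at h2
      · have h2 : (contractPlusPendant' G u v).Reachable (cmap u v v) (cmap u v x) := by
          obtain ⟨p⟩ := h
          exact ⟨p.map ⟨cmap u v, fun hh => adj'_of_H huv hh⟩⟩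
        rwa [cmap_v, cmap_ne hxv] at h2
  intro x y
  exact (key x).symm.trans (key y)

lemma primeDistPendant [DecidableEq V] (hG : G.Connected) (huv : G.Adj u v) {x : V}
    (hxv : x ≠ v) :
    (contractPlusPendant' G u v).dist x v = (contractPlusPendant' G u v).dist x u + 1 := by
  classical
  set G' := contractPlusPendant' G u v with hG'
  have hc : G'.Connected := conn' hG huv
  set g : V → ℝ := fun w => if w = v then (G'.dist x u : ℝ) + 1 else (G'.dist x w : ℝ) with hgdef
  have hgv : g v = (G'.dist x u : ℝ) + 1 := by simp [hgdef]
  have hgw : ∀ w, w ≠ v → g w = (G'.dist x w : ℝ) := by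
    intro w hw; simp only [hgdef]; rw [if_neg hw]
  have hlip : ∀ ⦃a b⦄, G'.Adj a b → g b ≤ g a + 1 := by
    intro a b hab
    by_cases hbv : b = v
    · subst hbv
      have hau : a = u := (adj'_v_iff huv).mp hab.symm
      rw [hau, hgv, hgw u huv.ne]
    · by_cases hav : a = v
      · subst hav
        have hbu : b = u := (adj'_v_iff huv).mp hab
        rw [hbu, hgv, hgw u huv.ne]
        linarith
      · rw [hgw a hav, hgw b hbv]
        have htri := reach_triangle (hc.preconnected x a) hab.reachable
        rw [adj_dist_eq_one hab] at htri
        exact_mod_cast htri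
  have hgx : g x = 0 := by rw [hgw x hxv]; simp
  have hlow := dist_bound hlip (hc.preconnected x v)
  rw [hgx, zero_add, hgv] at hlow
  have hlow' : G'.dist x u + 1 ≤ G'.dist x v := by exact_mod_cast hlow
  have hup : G'.dist x v ≤ G'.dist x u + 1 := by
    have htri : G'.dist x v ≤ G'.dist x u + G'.dist u v := hc.dist_triangle
    have huv' : G'.dist u v = 1 := by
      apply adj_dist_eq_one
      exact ((adj'_v_iff huv).mpr rfl).symm
    omega
  omega

lemma H_adj_vb [DecidableEq V] (huv : G.Adj u v) {b : V} (hGadj : G.Adj v b) (hbu : b ≠ u) :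
    (G.deleteEdges {s(u,v)}).Adj v b := by
  rw [SimpleGraph.deleteEdges_adj]
  refine ⟨hGadj, ?_⟩
  simp only [Set.mem_singleton_iff]
  intro h
  rcases Sym2.eq_iff.mp h with ⟨h1, -⟩ | ⟨-, h2⟩
  · exact huv.ne.symm h1
  · exact hbu h2

lemma primeDistA [DecidableEq V] (hG : G.Connected) (huv : G.Adj u v)
    (hsep : ¬ (G.deleteEdges {s(u,v)}).Reachable u v) {x : V}
    (hx : (G.deleteEdges {s(u,v)}).Reachable u x) :
    (∀ y, (G.deleteEdges {s(u,v)}).Reachable u y →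
        (contractPlusPendant' G u v).dist x y = (G.deleteEdges {s(u,v)}).dist x y) ∧
    (∀ y, (G.deleteEdges {s(u,v)}).Reachable v y → y ≠ v →
        (contractPlusPendant' G u v).dist x y =
          (G.deleteEdges {s(u,v)}).dist x u + (G.deleteEdges {s(u,v)}).dist v y) := by
  classical
  set H := G.deleteEdges {s(u,v)} with hH
  set G' := contractPlusPendant' G u v with hG'
  have hc : G'.Connected := conn' hG huv
  have hdisj : ∀ w, H.Reachable u w → H.Reachable v w → False :=
    fun w h1 h2 => hsep (h1.trans h2.symm)
  have hxv : x ≠ v := by intro h; exact hsep (h ▸ hx)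
  have hAu : H.Reachable u u := SimpleGraph.Reachable.refl u
  set g : V → ℝ := fun w => if w = v then (H.dist x u : ℝ) + 1
    else if H.Reachable u w then (H.dist x w : ℝ)
    else (H.dist x u : ℝ) + (H.dist v w : ℝ) with hgdef
  have hgv : g v = (H.dist x u : ℝ) + 1 := by simp [hgdef]
  have hgA : ∀ w, w ≠ v → H.Reachable u w → g w = (H.dist x w : ℝ) := by
    intro w hw hr; simp only [hgdef]; rw [if_neg hw, if_pos hr]
  have hgB : ∀ w, w ≠ v → ¬ H.Reachable u w → g w = (H.dist x u : ℝ) + (H.dist v w : ℝ) := by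
    intro w hw hr; simp only [hgdef]; rw [if_neg hw, if_neg hr]
  have hlip : ∀ ⦃a b⦄, G'.Adj a b → g b ≤ g a + 1 := by
    intro a b hab
    by_cases hbv : b = v
    · subst hbv
      have hau : a = u := (adj'_v_iff huv).mp hab.symm
      rw [hau, hgv, hgA u huv.ne hAu]
    · by_cases hav : a = v
      · subst hav
        have hbu : b = u := (adj'_v_iff huv).mp hab
        rw [hbu, hgv, hgA u huv.ne hAu]
        linarith
      · rcases (adj'_notv hav hbv).mp hab with ⟨hne, hcase⟩
        rcases hcase with hGadj | ⟨hau, hGadj⟩ | ⟨hbu, hGadj⟩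
        · rcases edge_classify hG hsep hGadj with he | ⟨hadj, hside⟩
          · exfalso
            rcases Sym2.eq_iff.mp he with ⟨-, h2⟩ | ⟨h1, -⟩
            · exact hbv h2
            · exact hav h1
          · rcases hside with ⟨ha, hb⟩ | ⟨ha, hb⟩
            · have htri := reach_triangle (hx.symm.trans ha) hadj.reachable
              rw [adj_dist_eq_one hadj] at htri
              rw [hgA a hav ha, hgA b hbv hb]
              exact_mod_cast htri
            · have hna : ¬ H.Reachable u a := fun h => hdisj a h ha
              have hnb : ¬ H.Reachable u b := fun h => hdisj b h hb
              have htri := reach_triangle ha hadj.reachable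
              rw [adj_dist_eq_one hadj] at htri
              rw [hgB a hav hna, hgB b hbv hnb]
              have : (H.dist v b : ℝ) ≤ H.dist v a + 1 := by exact_mod_cast htri
              linarith
        · -- a = u, G.Adj v b
          have hbu : b ≠ u := by rw [hau] at hne; exact fun h => hne h.symm
          have hadj : H.Adj v b := H_adj_vb huv hGadj hbu
          have hb : H.Reachable v b := hadj.reachable
          have hnb : ¬ H.Reachable u b := fun h => hdisj b h hb
          rw [hau, hgA u huv.ne hAu, hgB b hbv hnb]
          rw [adj_dist_eq_one hadj]
          push_cast
          linarith
        · -- b = u, G.Adj v a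
          have hau : a ≠ u := by rw [hbu] at hne; exact fun h => hne h
          have hadj : H.Adj v a := H_adj_vb huv hGadj hau
          have ha : H.Reachable v a := hadj.reachable
          have hna : ¬ H.Reachable u a := fun h => hdisj a h ha
          rw [hbu, hgA u huv.ne hAu, hgB a hav hna]
          have c1 : (0:ℝ) ≤ (H.dist v a : ℝ) := Nat.cast_nonneg _
          push_cast
          linarith
  have hgx : g x = 0 := by rw [hgA x hxv hx]; simp
  constructor
  · intro y hy
    have hyv : y ≠ v := by intro h; exact hsep (h ▸ hy)
    have hlow := dist_bound hlip (hc.preconnected x y)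
    rw [hgx, zero_add, hgA y hyv hy] at hlow
    have hlow' : H.dist x y ≤ G'.dist x y := by exact_mod_cast hlow
    have hup : G'.dist x y ≤ H.dist x y := by
      have := dist'_le_H (G := G) huv (hx.symm.trans hy)
      rwa [cmap_ne hxv, cmap_ne hyv] at this
    omega
  · intro y hy hyv
    have hny : ¬ H.Reachable u y := fun h => hdisj y h hy
    have hlow := dist_bound hlip (hc.preconnected x y)
    rw [hgx, zero_add, hgB y hyv hny] at hlow
    have hlow' : H.dist x u + H.dist v y ≤ G'.dist x y := by exact_mod_cast hlow
    have hup : G'.dist x y ≤ H.dist x u + H.dist v y := by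
      have htri : G'.dist x y ≤ G'.dist x u + G'.dist u y := hc.dist_triangle
      have h1 : G'.dist x u ≤ H.dist x u := by
        have := dist'_le_H (G := G) huv hx.symm
        rwa [cmap_ne hxv, cmap_ne huv.ne] at this
      have h2 : G'.dist u y ≤ H.dist v y := by
        have := dist'_le_H (G := G) huv hy
        rwa [cmap_v, cmap_ne hyv] at this
      omega
    omega

lemma primeDistB [DecidableEq V] (hG : G.Connected) (huv : G.Adj u v)
    (hsep : ¬ (G.deleteEdges {s(u,v)}).Reachable u v) {x : V}
    (hx : (G.deleteEdges {s(u,v)}).Reachable v x) (hxv : x ≠ v) :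
    ∀ y, (G.deleteEdges {s(u,v)}).Reachable v y → y ≠ v →
      (contractPlusPendant' G u v).dist x y = (G.deleteEdges {s(u,v)}).dist x y := by
  classical
  set H := G.deleteEdges {s(u,v)} with hH
  set G' := contractPlusPendant' G u v with hG'
  have hc : G'.Connected := conn' hG huv
  have hdisj : ∀ w, H.Reachable u w → H.Reachable v w → False :=
    fun w h1 h2 => hsep (h1.trans h2.symm)
  have hAu : H.Reachable u u := SimpleGraph.Reachable.refl u
  have hnx : ¬ H.Reachable u x := fun h => hdisj x h hx
  set g : V → ℝ := fun w => if w = v then (H.dist x v : ℝ) + 1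
    else if H.Reachable u w then (H.dist x v : ℝ) + (H.dist u w : ℝ)
    else (H.dist x w : ℝ) with hgdef
  have hgv : g v = (H.dist x v : ℝ) + 1 := by simp [hgdef]
  have hgA : ∀ w, w ≠ v → H.Reachable u w → g w = (H.dist x v : ℝ) + (H.dist u w : ℝ) := by
    intro w hw hr; simp only [hgdef]; rw [if_neg hw, if_pos hr]
  have hgB : ∀ w, w ≠ v → ¬ H.Reachable u w → g w = (H.dist x w : ℝ) := by
    intro w hw hr; simp only [hgdef]; rw [if_neg hw, if_neg hr]
  have hlip : ∀ ⦃a b⦄, G'.Adj a b → g b ≤ g a + 1 := by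
    intro a b hab
    by_cases hbv : b = v
    · subst hbv
      have hau : a = u := (adj'_v_iff huv).mp hab.symm
      rw [hau, hgv, hgA u huv.ne hAu, SimpleGraph.dist_self]
      push_cast
      linarith
    · by_cases hav : a = v
      · subst hav
        have hbu : b = u := (adj'_v_iff huv).mp hab
        rw [hbu, hgv, hgA u huv.ne hAu, SimpleGraph.dist_self]
        push_cast
        linarith
      · rcases (adj'_notv hav hbv).mp hab with ⟨hne, hcase⟩
        rcases hcase with hGadj | ⟨hau, hGadj⟩ | ⟨hbu, hGadj⟩
        · rcases edge_classify hG hsep hGadj with he | ⟨hadj, hside⟩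
          · exfalso
            rcases Sym2.eq_iff.mp he with ⟨-, h2⟩ | ⟨h1, -⟩
            · exact hbv h2
            · exact hav h1
          · rcases hside with ⟨ha, hb⟩ | ⟨ha, hb⟩
            · have htri := reach_triangle ha hadj.reachable
              rw [adj_dist_eq_one hadj] at htri
              rw [hgA a hav ha, hgA b hbv hb]
              have : (H.dist u b : ℝ) ≤ H.dist u a + 1 := by exact_mod_cast htri
              linarith
            · have hna : ¬ H.Reachable u a := fun h => hdisj a h ha
              have hnb : ¬ H.Reachable u b := fun h => hdisj b h hb
              have htri := reach_triangle (hx.symm.trans ha) hadj.reachable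
              rw [adj_dist_eq_one hadj] at htri
              rw [hgB a hav hna, hgB b hbv hnb]
              exact_mod_cast htri
        · -- a = u, G.Adj v b
          have hbu : b ≠ u := by rw [hau] at hne; exact fun h => hne h.symm
          have hadj : H.Adj v b := H_adj_vb huv hGadj hbu
          have hb : H.Reachable v b := hadj.reachable
          have hnb : ¬ H.Reachable u b := fun h => hdisj b h hb
          have htri := reach_triangle hx.symm hb
          rw [adj_dist_eq_one hadj] at htri
          rw [hau, hgA u huv.ne hAu, hgB b hbv hnb, SimpleGraph.dist_self]
          have : (H.dist x b : ℝ) ≤ H.dist x v + 1 := by exact_mod_cast htri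
          push_cast
          linarith
        · -- b = u, G.Adj v a
          have hau : a ≠ u := by rw [hbu] at hne; exact fun h => hne h
          have hadj : H.Adj v a := H_adj_vb huv hGadj hau
          have ha : H.Reachable v a := hadj.reachable
          have hna : ¬ H.Reachable u a := fun h => hdisj a h ha
          have htri := reach_triangle (hx.symm.trans ha) ha.symm
          have had : H.dist a v = 1 := by
            rw [SimpleGraph.dist_comm]; exact adj_dist_eq_one hadj
          rw [had] at htri
          rw [hbu, hgA u huv.ne hAu, hgB a hav hna, SimpleGraph.dist_self]
          have : (H.dist x v : ℝ) ≤ H.dist x a + 1 := by exact_mod_cast htri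
          push_cast
          linarith
  have hgx : g x = 0 := by rw [hgB x hxv hnx]; simp
  intro y hy hyv
  have hny : ¬ H.Reachable u y := fun h => hdisj y h hy
  have hlow := dist_bound hlip (hc.preconnected x y)
  rw [hgx, zero_add, hgB y hyv hny] at hlow
  have hlow' : H.dist x y ≤ G'.dist x y := by exact_mod_cast hlow
  have hup : G'.dist x y ≤ H.dist x y := by
    have := dist'_le_H (G := G) huv (hx.symm.trans hy)
    rwa [cmap_ne hxv, cmap_ne hyv] at this
  omega

end Prime

end SpecAux

/-- Lemma 2.2: if `uv` is a cut-edge of the connected graph `G` which is not a pendant edge,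
then contracting `uv` and adding a pendant edge strictly decreases the distance spectral
radius. -/
theorem stmt2 {V : Type*} [Fintype V] [DecidableEq V] (G : SimpleGraph V)
    [DecidableRel G.Adj] (hG : G.Connected) (u v : V) (huv : G.Adj u v)
    (hcut : ¬ (G.deleteEdges {s(u, v)}).Connected)
    (hu : 2 ≤ G.degree u) (hv : 2 ≤ G.degree v) :
    distSpectralRadius G > distSpectralRadius (contractPlusPendant G u v) := by
  classical
  have huvne : u ≠ v := huv.ne
  haveI : Nonempty V := ⟨u⟩
  set H := G.deleteEdges {s(u,v)} with hH
  have hsep : ¬ H.Reachable u v := SpecAux.sep_of_not_connected hG huv hcut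
  have hdisj : ∀ w, H.Reachable u w → H.Reachable v w → False :=
    fun w h1 h2 => hsep (h1.trans h2.symm)
  have hside : ∀ x, H.Reachable u x ∨ H.Reachable v x :=
    fun x => SpecAux.side_total (u := u) (v := v) hG x
  set G' : SimpleGraph V := contractPlusPendant G u v with hG'def
  have hc' : G'.Connected := SpecAux.conn' (G := G) hG huv
  -- neighbors witnessing the degree conditions
  obtain ⟨a₀, ha₀N, ha₀v⟩ : ∃ a ∈ G.neighborFinset u, a ≠ v := by
    apply Finset.exists_mem_ne
    · rw [SimpleGraph.card_neighborFinset_eq_degree]; omega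
  have ha₀adj : G.Adj u a₀ := (SimpleGraph.mem_neighborFinset _ _ _).mp ha₀N
  have ha₀u : a₀ ≠ u := ha₀adj.ne'
  have hAa₀ : H.Reachable u a₀ := by
    have hadj : H.Adj u a₀ := by
      rw [hH, SimpleGraph.deleteEdges_adj]
      refine ⟨ha₀adj, ?_⟩
      simp only [Set.mem_singleton_iff]
      intro h
      rcases Sym2.eq_iff.mp h with ⟨-, h2⟩ | ⟨h1, -⟩
      · exact ha₀v h2
      · exact huvne h1
    exact hadj.reachable
  obtain ⟨b₀, hb₀N, hb₀u⟩ : ∃ b ∈ G.neighborFinset v, b ≠ u := by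
    apply Finset.exists_mem_ne
    · rw [SimpleGraph.card_neighborFinset_eq_degree]; omega
  have hb₀adj : G.Adj v b₀ := (SimpleGraph.mem_neighborFinset _ _ _).mp hb₀N
  have hb₀v : b₀ ≠ v := hb₀adj.ne'
  have hBb₀ : H.Reachable v b₀ := (SpecAux.H_adj_vb huv hb₀adj hb₀u).reachable
  have hnAb₀ : ¬ H.Reachable u b₀ := fun h => hdisj b₀ h hBb₀
  -- G-distance formulas
  have hGAA : ∀ x y, H.Reachable u x → H.Reachable u y → G.dist x y = H.dist x y :=
    fun x y hx hy => (SpecAux.cutDist hG huv hsep hx).1 hy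
  have hGAB : ∀ x y, H.Reachable u x → H.Reachable v y →
      G.dist x y = H.dist x u + 1 + H.dist v y :=
    fun x y hx hy => (SpecAux.cutDist hG huv hsep hx).2 hy
  have hswap : G.deleteEdges {s(v,u)} = H := by
    rw [hH]
    congr 1
    rw [Sym2.eq_swap]
  have hGBB : ∀ x y, H.Reachable v x → H.Reachable v y → G.dist x y = H.dist x y := by
    intro x y hx hy
    have hsep' : ¬ (G.deleteEdges {s(v,u)}).Reachable v u := by
      rw [hswap]; exact fun h => hsep h.symm
    have hx' : (G.deleteEdges {s(v,u)}).Reachable v x := by rw [hswap]; exact hx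
    have hy' : (G.deleteEdges {s(v,u)}).Reachable v y := by rw [hswap]; exact hy
    have h := (SpecAux.cutDist hG huv.symm hsep' hx').1 hy'
    rwa [hswap] at h
  -- G'-distance formulas
  have hPend : ∀ x, x ≠ v → G'.dist x v = G'.dist x u + 1 :=
    fun x hx => SpecAux.primeDistPendant hG huv hx
  have hPAA : ∀ x y, H.Reachable u x → H.Reachable u y → G'.dist x y = H.dist x y :=
    fun x y hx hy => (SpecAux.primeDistA hG huv hsep hx).1 y hy
  have hPAB : ∀ x y, H.Reachable u x → H.Reachable v y → y ≠ v →
      G'.dist x y = H.dist x u + H.dist v y :=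
    fun x y hx hy hyv => (SpecAux.primeDistA hG huv hsep hx).2 y hy hyv
  have hPBB : ∀ x y, H.Reachable v x → x ≠ v → H.Reachable v y → y ≠ v →
      G'.dist x y = H.dist x y :=
    fun x y hx hxv hy hyv => SpecAux.primeDistB hG huv hsep hx hxv y hy hyv
  -- spectral setup for G'
  have hsymm' : ∀ i j, distMatrix G' i j = distMatrix G' j i := by
    intro i j; unfold distMatrix; rw [SimpleGraph.dist_comm]
  have hnn' : ∀ i j, 0 ≤ distMatrix G' i j := fun i j => Nat.cast_nonneg _
  have hdiag' : ∀ i, distMatrix G' i i = 0 := by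
    intro i; unfold distMatrix; rw [SimpleGraph.dist_self]; norm_num
  have hpos' : ∀ i j, i ≠ j → 0 < distMatrix G' i j := by
    intro i j hij
    unfold distMatrix
    have := hc'.pos_dist_of_ne hij
    exact_mod_cast this
  obtain ⟨Y, hYpos, hYsum, hYeig, hrho'⟩ := SpecAux.perron hsymm' hnn' hpos' hdiag' ⟨u, v, huvne⟩
  set ρ' := sSup (SpecAux.eigSet (distMatrix G')) with hρ'def
  have hρ'eq : distSpectralRadius G' = ρ' := rfl
  -- indicator weights
  set α : V → ℝ := fun w => if w = v then (-1:ℝ) else if H.Reachable u w then 1 else 0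
    with hαdef
  set β : V → ℝ := fun w => if w ≠ v ∧ ¬ H.Reachable u w then (1:ℝ) else 0 with hβdef
  have hαv : α v = -1 := by simp [hαdef]
  have hαA : ∀ w, H.Reachable u w → α w = 1 := by
    intro w hw
    have hwv : w ≠ v := fun h => hdisj w hw (h ▸ SimpleGraph.Reachable.refl w)
    simp [hαdef, hwv, hw]
  have hαB : ∀ w, w ≠ v → ¬ H.Reachable u w → α w = 0 := by
    intro w h1 h2; simp [hαdef, h1, h2]
  have hβv : β v = 0 := by simp [hβdef]
  have hβA : ∀ w, H.Reachable u w → β w = 0 := by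
    intro w hw; simp [hβdef]; tauto
  have hβB : ∀ w, w ≠ v → ¬ H.Reachable u w → β w = 1 := by
    intro w h1 h2; simp [hβdef, h1, h2]
  have hvv : H.Reachable v v := SimpleGraph.Reachable.refl v
  have huu : H.Reachable u u := SimpleGraph.Reachable.refl u
  -- the pointwise difference identity
  have hdelta : ∀ x y, (G.dist x y : ℝ) - (G'.dist x y : ℝ) = β x * α y + α x * β y := by
    intro x y
    by_cases hxv : x = v
    · rw [hxv]
      by_cases hyv : y = v
      · rw [hyv]
        rw [SimpleGraph.dist_self, SimpleGraph.dist_self, hαv, hβv]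
        norm_num
      · rcases hside y with hy | hy
        · -- x = v, y ∈ A
          have h1 : G.dist v y = H.dist y u + 1 := by
            rw [SimpleGraph.dist_comm, hGAB y v hy hvv, SimpleGraph.dist_self]
          have h2 : G'.dist v y = H.dist y u + 1 := by
            rw [SimpleGraph.dist_comm, hPend y hyv, hPAA y u hy huu]
          rw [h1, h2, hαA y hy, hβv, hβA y hy, hαv]
          push_cast
          ring
        · -- x = v, y ∈ B₀
          have hny : ¬ H.Reachable u y := fun h => hdisj y h hy
          have h1 : G.dist v y = H.dist v y := hGBB v y hvv hy
          have h2 : G'.dist v y = H.dist v y + 1 := by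
            rw [SimpleGraph.dist_comm, hPend y hyv]
            have h3 : G'.dist y u = H.dist v y := by
              rw [SimpleGraph.dist_comm, hPAB u y huu hy hyv, SimpleGraph.dist_self]
              omega
            omega
          rw [h1, h2, hαv, hβv, hβB y hyv hny, hαB y hyv hny]
          push_cast
          ring
    · rcases hside x with hx | hx
      · -- x ∈ A
        by_cases hyv : y = v
        · rw [hyv]
          have h1 : G.dist x v = H.dist x u + 1 := by
            rw [hGAB x v hx hvv, SimpleGraph.dist_self]
          have h2 : G'.dist x v = H.dist x u + 1 := by
            rw [hPend x hxv, hPAA x u hx huu]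
          rw [h1, h2, hαA x hx, hβv, hβA x hx, hαv]
          push_cast
          ring
        · rcases hside y with hy | hy
          · -- A, A
            rw [hGAA x y hx hy, hPAA x y hx hy, hβA x hx, hβA y hy, hαA x hx]
            push_cast
            ring
          · -- A, B₀
            have hny : ¬ H.Reachable u y := fun h => hdisj y h hy
            rw [hGAB x y hx hy, hPAB x y hx hy hyv, hαA x hx, hβA x hx, hβB y hyv hny,
              hαB y hyv hny]
            push_cast
            ring
      · -- x ∈ B₀
        have hnx : ¬ H.Reachable u x := fun h => hdisj x h hx
        by_cases hyv : y = v
        · rw [hyv]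
          have h1 : G.dist x v = H.dist x v := hGBB x v hx hvv
          have h2 : G'.dist x v = H.dist x v + 1 := by
            rw [hPend x hxv]
            have h3 : G'.dist x u = H.dist v x := by
              rw [SimpleGraph.dist_comm, hPAB u x huu hx hxv, SimpleGraph.dist_self]
              omega
            rw [h3, SimpleGraph.dist_comm (u := v) (v := x)]
          rw [h1, h2, hβB x hxv hnx, hαv, hαB x hxv hnx, hβv]
          push_cast
          ring
        · rcases hside y with hy | hy
          · -- B₀, A
            have h1 : G.dist x y = H.dist y u + 1 + H.dist v x := by
              rw [SimpleGraph.dist_comm, hGAB y x hy hx]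
            have h2 : G'.dist x y = H.dist y u + H.dist v x := by
              rw [SimpleGraph.dist_comm, hPAB y x hy hx hxv]
            rw [h1, h2, hβB x hxv hnx, hαA y hy, hαB x hxv hnx, hβA y hy]
            push_cast
            ring
          · -- B₀, B₀
            have hny : ¬ H.Reachable u y := fun h => hdisj y h hy
            rw [hGBB x y hx hy, hPBB x y hx hxv hy hyv, hβB x hxv hnx, hαB y hyv hny,
              hαB x hxv hnx, hβB y hyv hny]
            push_cast
            ring
  -- quadratic forms
  have hmul : ∀ (K : SimpleGraph V) (i : V),
      (distMatrix K).mulVec Y i = ∑ j, (K.dist i j : ℝ) * Y j := by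
    intro K i
    simp [distMatrix, Matrix.mulVec, dotProduct]
  have hQG' : (∑ i, ((distMatrix G').mulVec Y) i * Y i) = ρ' := by
    rw [hYeig]
    have hpt : ∀ i, (ρ' • Y) i * Y i = ρ' * Y i ^ 2 := by
      intro i; simp only [Pi.smul_apply, smul_eq_mul]; ring
    rw [Finset.sum_congr rfl (fun i _ => hpt i), ← Finset.mul_sum, hYsum, mul_one]
  have hdiff : (∑ i, ((distMatrix G).mulVec Y) i * Y i)
      - (∑ i, ((distMatrix G').mulVec Y) i * Y i)
      = 2 * (∑ w, α w * Y w) * (∑ w, β w * Y w) := by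
    have e1 : (∑ i, ((distMatrix G).mulVec Y) i * Y i)
        - (∑ i, ((distMatrix G').mulVec Y) i * Y i)
        = ∑ i, ∑ j, ((G.dist i j : ℝ) - (G'.dist i j : ℝ)) * (Y j * Y i) := by
      rw [← Finset.sum_sub_distrib]
      apply Finset.sum_congr rfl
      intro i _
      rw [hmul G i, hmul G' i, ← sub_mul, ← Finset.sum_sub_distrib, Finset.sum_mul]
      apply Finset.sum_congr rfl
      intro j _
      ring
    rw [e1]
    have e2 : ∀ i, ∑ j, ((G.dist i j : ℝ) - (G'.dist i j : ℝ)) * (Y j * Y i)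
        = (β i * Y i) * (∑ w, α w * Y w) + (α i * Y i) * (∑ w, β w * Y w) := by
      intro i
      have hpt : ∀ j, ((G.dist i j : ℝ) - (G'.dist i j : ℝ)) * (Y j * Y i)
          = (β i * Y i) * (α j * Y j) + (α i * Y i) * (β j * Y j) := by
        intro j
        rw [hdelta i j]
        ring
      rw [Finset.sum_congr rfl (fun j _ => hpt j), Finset.sum_add_distrib,
        ← Finset.mul_sum, ← Finset.mul_sum]
    rw [Finset.sum_congr rfl (fun i _ => e2 i), Finset.sum_add_distrib,
      ← Finset.sum_mul, ← Finset.sum_mul]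
    ring
  -- positivity of the β-sum
  have hSβpos : 0 < ∑ w, β w * Y w := by
    apply Finset.sum_pos'
    · intro w _
      have : (0:ℝ) ≤ β w := by
        simp only [hβdef]
        split <;> norm_num
      exact mul_nonneg this (hYpos w).le
    · refine ⟨b₀, Finset.mem_univ b₀, ?_⟩
      rw [hβB b₀ hb₀v hnAb₀, one_mul]
      exact hYpos b₀
  -- eigen rows
  have hrow : ∀ i, ∑ j, (G'.dist i j : ℝ) * Y j = ρ' * Y i := by
    intro i
    have h := congrFun hYeig i
    rw [hmul G' i] at h
    simpa using h
  have hduv : G'.dist u v = 1 :=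
    SpecAux.adj_dist_eq_one (((SpecAux.adj'_v_iff (G := G) huv).mpr rfl).symm)
  have hkey1 : ρ' * Y v - ρ' * Y u = (∑ j, Y j) - 2 * Y v := by
    have hptvu : ∀ j, (G'.dist v j : ℝ) * Y j - (G'.dist u j : ℝ) * Y j
        = Y j - (if j = v then 2 * Y v else 0) := by
      intro j
      by_cases hjv : j = v
      · rw [hjv, if_pos rfl, SimpleGraph.dist_self, hduv]
        push_cast
        ring
      · rw [if_neg hjv]
        have h1 : G'.dist v j = G'.dist u j + 1 := by
          rw [SimpleGraph.dist_comm (G := G'), hPend j hjv,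
            SimpleGraph.dist_comm (G := G')]
        rw [h1]
        push_cast
        ring
    have h2 : ∑ j, ((G'.dist v j : ℝ) * Y j - (G'.dist u j : ℝ) * Y j)
        = ∑ j, (Y j - (if j = v then 2 * Y v else 0)) :=
      Finset.sum_congr rfl (fun j _ => hptvu j)
    rw [Finset.sum_sub_distrib, Finset.sum_sub_distrib, hrow v, hrow u] at h2
    rw [Finset.sum_ite_eq' Finset.univ v (fun _ => 2 * Y v)] at h2
    simpa using h2
  -- partition of the total sum
  have hStot : (∑ j, Y j) = (∑ w, (if H.Reachable u w then (1:ℝ) else 0) * Y w)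
      + (∑ w, β w * Y w) + Y v := by
    have hpt : ∀ j, Y j = (if H.Reachable u j then (1:ℝ) else 0) * Y j + β j * Y j
        + (if j = v then Y j else 0) := by
      intro j
      by_cases hjv : j = v
      · rw [hjv, if_pos rfl, if_neg hsep, hβv]
        ring
      · rw [if_neg hjv]
        by_cases hjA : H.Reachable u j
        · rw [if_pos hjA, hβA j hjA]
          ring
        · rw [if_neg hjA, hβB j hjv hjA]
          ring
    rw [Finset.sum_congr rfl (fun j _ => hpt j), Finset.sum_add_distrib,
      Finset.sum_add_distrib, Finset.sum_ite_eq' Finset.univ v Y]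
    simp
  have hSαval : (∑ w, α w * Y w)
      = (∑ w, (if H.Reachable u w then (1:ℝ) else 0) * Y w) - Y v := by
    have hpt : ∀ w, α w * Y w = (if H.Reachable u w then (1:ℝ) else 0) * Y w
        - (if w = v then Y w else 0) := by
      intro w
      by_cases hwv : w = v
      · rw [hwv, if_pos rfl, if_neg hsep, hαv]
        ring
      · rw [if_neg hwv]
        by_cases hwA : H.Reachable u w
        · rw [if_pos hwA, hαA w hwA]
          ring
        · rw [if_neg hwA, hαB w hwv hwA]
          ring
    rw [Finset.sum_congr rfl (fun w _ => hpt w), Finset.sum_sub_distrib,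
      Finset.sum_ite_eq' Finset.univ v Y]
    simp
  -- lower bound for the A-side sum
  have hSA_ge : Y u + Y a₀ ≤ ∑ w, (if H.Reachable u w then (1:ℝ) else 0) * Y w := by
    have hsub : ({u, a₀} : Finset V) ⊆ Finset.univ := Finset.subset_univ _
    have hnn : ∀ w ∈ Finset.univ, w ∉ ({u, a₀} : Finset V) →
        0 ≤ (if H.Reachable u w then (1:ℝ) else 0) * Y w := by
      intro w _ _
      have : (0:ℝ) ≤ (if H.Reachable u w then (1:ℝ) else 0) := by split <;> norm_num
      exact mul_nonneg this (hYpos w).le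
    have h := Finset.sum_le_sum_of_subset_of_nonneg hsub hnn
    rw [Finset.sum_insert (by simp [ha₀u.symm]), Finset.sum_singleton] at h
    rw [if_pos huu, if_pos hAa₀, one_mul, one_mul] at h
    exact h
  -- row at a₀ bounds the B-side sum
  have hrowa : (∑ w, β w * Y w) + Y v ≤ ρ' * Y a₀ := by
    rw [← hrow a₀]
    have hpt : ∀ j, β j * Y j + (if j = v then Y j else 0) ≤ (G'.dist a₀ j : ℝ) * Y j := by
      intro j
      by_cases hjv : j = v
      · rw [hjv, if_pos rfl, hβv, zero_mul, zero_add]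
        have h1 : 1 ≤ G'.dist a₀ v := by
          rw [hPend a₀ ha₀v]; omega
        have h1' : (1:ℝ) ≤ (G'.dist a₀ v : ℝ) := by exact_mod_cast h1
        nlinarith [hYpos v]
      · rw [if_neg hjv, add_zero]
        by_cases hjA : H.Reachable u j
        · rw [hβA j hjA, zero_mul]
          exact mul_nonneg (Nat.cast_nonneg _) (hYpos j).le
        · rw [hβB j hjv hjA, one_mul]
          have hne : a₀ ≠ j := fun h => hjA (h ▸ hAa₀)
          have h1 : 1 ≤ G'.dist a₀ j := hc'.pos_dist_of_ne hne
          have h1' : (1:ℝ) ≤ (G'.dist a₀ j : ℝ) := by exact_mod_cast h1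
          nlinarith [hYpos j]
    have h := Finset.sum_le_sum (fun j (_ : j ∈ Finset.univ) => hpt j)
    rw [Finset.sum_add_distrib, Finset.sum_ite_eq' Finset.univ v Y] at h
    simpa using h
  -- α-sum positive
  have hSαpos : 0 < ∑ w, α w * Y w := by
    rw [hSαval]
    have h1 : (ρ' + 1) * Y v = ρ' * Y u
        + (∑ w, (if H.Reachable u w then (1:ℝ) else 0) * Y w) + (∑ w, β w * Y w) := by
      rw [hStot] at hkey1
      linarith
    have h2 : ρ' * Y u + ρ' * Y a₀
        ≤ ρ' * (∑ w, (if H.Reachable u w then (1:ℝ) else 0) * Y w) := by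
      nlinarith [hSA_ge, hrho']
    have h3 : (∑ w, β w * Y w) < ρ' * Y a₀ := by
      have := hYpos v
      linarith [hrowa]
    nlinarith [hrho', hYpos v]
  -- final chain
  have hsymmG : ∀ i j, distMatrix G i j = distMatrix G j i := by
    intro i j; unfold distMatrix; rw [SimpleGraph.dist_comm]
  have hQle : (∑ i, ((distMatrix G).mulVec Y) i * Y i) ≤ distSpectralRadius G :=
    SpecAux.quad_le_sSup hsymmG hYsum
  have hprod : 0 < 2 * (∑ w, α w * Y w) * (∑ w, β w * Y w) := by positivity
  rw [hρ'eq]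
  linarith [hdiff, hQG', hQle, hprod]
end

section
/- Let G be the graph obtained from a nontrivial connected graph G' by attaching at a fixed vertex of G' two pendant paths v_1 v_2 ⋯ v_k and u_1 u_2 ⋯ u_k of lengths k−1 and k respectively, where v_1 is identified appropriately so that the attachment vertex is adjacent to u_1 and v_1 lies on the shorter branch (k ≥ 2). Let X be the distance Perron vector of G, with entry x_w at vertex w. Then x_{v_1} < x_{u_1}, and for each i with 2 ≤ i ≤ k, x_{u_{i−1}} < x_{v_i} < x_{u_i}. -/
open SimpleGraph

/-- The graph obtained from `G` by attaching at `w` two pendant paths, of `p` and `q`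
new vertices respectively. -/
def attachPaths {V : Type*} (G : SimpleGraph V) (w : V) (p q : ℕ) :
    SimpleGraph (V ⊕ (Fin p ⊕ Fin q)) :=
  SimpleGraph.fromRel (fun a b =>
    match a, b with
    | Sum.inl x, Sum.inl y => G.Adj x y
    | Sum.inl x, Sum.inr (Sum.inl i) => x = w ∧ (i : ℕ) = 0
    | Sum.inl x, Sum.inr (Sum.inr i) => x = w ∧ (i : ℕ) = 0
    | Sum.inr (Sum.inl i), Sum.inr (Sum.inl j) => (i : ℕ) + 1 = (j : ℕ)
    | Sum.inr (Sum.inr i), Sum.inr (Sum.inr j) => (i : ℕ) + 1 = (j : ℕ)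
    | _, _ => False)

/-- In `attachPaths G w (k-1) k`, the vertex `v_i` (1-based index `i = (·:ℕ)+1`):
`v_1` is the attachment vertex `w` itself, and `v_2, …, v_k` are the `k-1` new
vertices of the shorter arm. -/
def armV {V : Type*} (w : V) (k : ℕ) (i : Fin k) : V ⊕ (Fin (k - 1) ⊕ Fin k) :=
  if _h : (i : ℕ) = 0 then Sum.inl w
  else Sum.inr (Sum.inl ⟨(i : ℕ) - 1, by have := i.isLt; omega⟩)

/-- In `attachPaths G w (k-1) k`, the vertex `u_i` (1-based index `i = (·:ℕ)+1`) of the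
longer arm. -/
def armU {V : Type*} (_w : V) (k : ℕ) (i : Fin k) : V ⊕ (Fin (k - 1) ⊕ Fin k) :=
  Sum.inr (Sum.inr i)

namespace AP
variable {V : Type*} (G' : SimpleGraph V) (w : V) (p q : ℕ)

/-- claimed distance function -/
noncomputable def cdist : (V ⊕ (Fin p ⊕ Fin q)) → (V ⊕ (Fin p ⊕ Fin q)) → ℤ
  | Sum.inl a, Sum.inl b => G'.dist a b
  | Sum.inl a, Sum.inr (Sum.inl t) => G'.dist a w + t + 1
  | Sum.inl a, Sum.inr (Sum.inr s) => G'.dist a w + s + 1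
  | Sum.inr (Sum.inl t), Sum.inl a => G'.dist a w + t + 1
  | Sum.inr (Sum.inr s), Sum.inl a => G'.dist a w + s + 1
  | Sum.inr (Sum.inl t), Sum.inr (Sum.inl t') => (((t:ℕ):ℤ) - ((t':ℕ):ℤ)).natAbs
  | Sum.inr (Sum.inr s), Sum.inr (Sum.inr s') => (((s:ℕ):ℤ) - ((s':ℕ):ℤ)).natAbs
  | Sum.inr (Sum.inl t), Sum.inr (Sum.inr s) => (t:ℕ) + (s:ℕ) + 2
  | Sum.inr (Sum.inr s), Sum.inr (Sum.inl t) => (t:ℕ) + (s:ℕ) + 2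

variable {G' w p q}

lemma adj_inl_inl {x y : V} (h : G'.Adj x y) :
    (attachPaths G' w p q).Adj (Sum.inl x) (Sum.inl y) := by
  rw [attachPaths, fromRel_adj]
  exact ⟨by simp [h.ne], Or.inl h⟩

lemma adj_w_v0 (h : 0 < p) :
    (attachPaths G' w p q).Adj (Sum.inl w) (Sum.inr (Sum.inl ⟨0, h⟩)) := by
  rw [attachPaths, fromRel_adj]
  exact ⟨by simp, Or.inl ⟨rfl, rfl⟩⟩

lemma adj_w_u0 (h : 0 < q) :
    (attachPaths G' w p q).Adj (Sum.inl w) (Sum.inr (Sum.inr ⟨0, h⟩)) := by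
  rw [attachPaths, fromRel_adj]
  exact ⟨by simp, Or.inl ⟨rfl, rfl⟩⟩

lemma adj_vv (t : ℕ) (h : t + 1 < p) :
    (attachPaths G' w p q).Adj (Sum.inr (Sum.inl ⟨t, by omega⟩)) (Sum.inr (Sum.inl ⟨t+1, h⟩)) := by
  rw [attachPaths, fromRel_adj]
  refine ⟨by simp [Fin.ext_iff], Or.inl rfl⟩

lemma adj_uu (s : ℕ) (h : s + 1 < q) :
    (attachPaths G' w p q).Adj (Sum.inr (Sum.inr ⟨s, by omega⟩)) (Sum.inr (Sum.inr ⟨s+1, h⟩)) := by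
  rw [attachPaths, fromRel_adj]
  refine ⟨by simp [Fin.ext_iff], Or.inl rfl⟩

lemma cdist_self (a : V ⊕ (Fin p ⊕ Fin q)) : cdist G' w p q a a = 0 := by
  rcases a with x | (t | s) <;> simp [cdist, SimpleGraph.dist_self]

lemma cdist_lip (hG : G'.Connected) (c a b : V ⊕ (Fin p ⊕ Fin q))
    (h : (attachPaths G' w p q).Adj a b) :
    cdist G' w p q a c ≤ cdist G' w p q b c + 1 := by
  have key : ∀ x y : V, G'.Adj x y → ∀ z, (G'.dist x z : ℤ) ≤ G'.dist y z + 1 := by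
    intro x y hxy z
    have h1 : G'.dist x z ≤ G'.dist x y + G'.dist y z := hG.dist_triangle
    have h2 : G'.dist x y ≤ 1 := by
      simpa using SimpleGraph.dist_le (SimpleGraph.Walk.cons hxy SimpleGraph.Walk.nil)
    push_cast; omega
  rw [attachPaths, fromRel_adj] at h
  obtain ⟨hne, h⟩ := h
  rcases a with x | (t | s) <;> rcases b with y | (t' | s')
  · -- inl / inl
    have hadj : G'.Adj x y := by rcases h with h | h; exact h; exact h.symm
    rcases c with z | (r | r')
    · simp only [cdist]; linarith [key _ _ hadj z]
    · simp only [cdist]; linarith [key _ _ hadj w]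
    · simp only [cdist]; linarith [key _ _ hadj w]
  · -- inl / inr inl
    rcases h with ⟨rfl, h0⟩ | h
    · rcases c with z | (r | r')
      · simp only [cdist]; rw [SimpleGraph.dist_comm]; omega
      · simp only [cdist, SimpleGraph.dist_self, h0]; omega
      · simp only [cdist, SimpleGraph.dist_self, h0]; omega
    · cases h
  · -- inl / inr inr
    rcases h with ⟨rfl, h0⟩ | h
    · rcases c with z | (r | r')
      · simp only [cdist]; rw [SimpleGraph.dist_comm]; omega
      · simp only [cdist, SimpleGraph.dist_self, h0]; omega
      · simp only [cdist, SimpleGraph.dist_self, h0]; omega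
    · cases h
  · -- inr inl / inl
    rcases h with h | ⟨rfl, h0⟩
    · cases h
    · rcases c with z | (r | r')
      · simp only [cdist]; rw [SimpleGraph.dist_comm]; omega
      · simp only [cdist, SimpleGraph.dist_self, h0]; omega
      · simp only [cdist, SimpleGraph.dist_self, h0]; omega
  · -- inr inl / inr inl
    rcases h with h | h <;>
      rcases c with z | (r | r') <;> simp only [cdist] <;> omega
  · -- inr inl / inr inr
    rcases h with h | h <;> cases h
  · -- inr inr / inl
    rcases h with h | ⟨rfl, h0⟩
    · cases h
    · rcases c with z | (r | r')
      · simp only [cdist]; rw [SimpleGraph.dist_comm]; omega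
      · simp only [cdist, SimpleGraph.dist_self, h0]; omega
      · simp only [cdist, SimpleGraph.dist_self, h0]; omega
  · -- inr inr / inr inl
    rcases h with h | h <;> cases h
  · -- inr inr / inr inr
    rcases h with h | h <;>
      rcases c with z | (r | r') <;> simp only [cdist] <;> omega


lemma cdist_walk_le (hG : G'.Connected) (c : V ⊕ (Fin p ⊕ Fin q)) {a b : V ⊕ (Fin p ⊕ Fin q)}
    (W : (attachPaths G' w p q).Walk a b) :
    cdist G' w p q a c ≤ cdist G' w p q b c + W.length := by
  induction W with
  | nil => simp
  | cons hadj W ih =>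
    have := cdist_lip (q := q) hG c _ _ hadj
    simp only [SimpleGraph.Walk.length_cons]
    push_cast
    omega

/-- the graph hom from G' into attachPaths -/
def inlHom : G' →g attachPaths G' w p q where
  toFun := Sum.inl
  map_rel' := fun h => adj_inl_inl h

lemma exists_walk_inl (hG : G'.Connected) (x y : V) :
    ∃ W : (attachPaths G' w p q).Walk (Sum.inl x) (Sum.inl y), W.length = G'.dist x y := by
  obtain ⟨W, hW⟩ := hG.exists_walk_length_eq_dist x y
  exact ⟨W.map (inlHom (w := w) (p := p) (q := q)), by exact (SimpleGraph.Walk.length_map _ _).trans hW⟩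

lemma exists_walk_wv : ∀ (t : ℕ) (h : t < p),
    ∃ W : (attachPaths G' w p q).Walk (Sum.inl w) (Sum.inr (Sum.inl ⟨t, h⟩)), W.length = t + 1 := by
  intro t
  induction t with
  | zero => exact fun h => ⟨SimpleGraph.Walk.cons (adj_w_v0 h) SimpleGraph.Walk.nil, rfl⟩
  | succ n ih =>
    intro h
    obtain ⟨W, hW⟩ := ih (by omega)
    exact ⟨W.concat (adj_vv n h), by rw [SimpleGraph.Walk.length_concat, hW]⟩

lemma exists_walk_wu : ∀ (s : ℕ) (h : s < q),
    ∃ W : (attachPaths G' w p q).Walk (Sum.inl w) (Sum.inr (Sum.inr ⟨s, h⟩)), W.length = s + 1 := by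
  intro s
  induction s with
  | zero => exact fun h => ⟨SimpleGraph.Walk.cons (adj_w_u0 h) SimpleGraph.Walk.nil, rfl⟩
  | succ n ih =>
    intro h
    obtain ⟨W, hW⟩ := ih (by omega)
    exact ⟨W.concat (adj_uu n h), by rw [SimpleGraph.Walk.length_concat, hW]⟩

lemma exists_walk_vseg : ∀ (d a : ℕ) (h : a + d < p),
    ∃ W : (attachPaths G' w p q).Walk (Sum.inr (Sum.inl ⟨a, by omega⟩)) (Sum.inr (Sum.inl ⟨a + d, h⟩)),
      W.length = d := by
  intro d
  induction d with
  | zero => exact fun a h => ⟨SimpleGraph.Walk.nil.copy rfl (by simp), by simp⟩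
  | succ n ih =>
    intro a h
    obtain ⟨W, hW⟩ := ih a (by omega)
    refine ⟨(W.concat (adj_vv (a + n) (by omega))).copy rfl (by simp [Fin.ext_iff]; omega), ?_⟩
    rw [SimpleGraph.Walk.length_copy, SimpleGraph.Walk.length_concat, hW]

lemma exists_walk_useg : ∀ (d a : ℕ) (h : a + d < q),
    ∃ W : (attachPaths G' w p q).Walk (Sum.inr (Sum.inr ⟨a, by omega⟩)) (Sum.inr (Sum.inr ⟨a + d, h⟩)),
      W.length = d := by
  intro d
  induction d with
  | zero => exact fun a h => ⟨SimpleGraph.Walk.nil.copy rfl (by simp), by simp⟩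
  | succ n ih =>
    intro a h
    obtain ⟨W, hW⟩ := ih a (by omega)
    refine ⟨(W.concat (adj_uu (a + n) (by omega))).copy rfl (by simp [Fin.ext_iff]; omega), ?_⟩
    rw [SimpleGraph.Walk.length_copy, SimpleGraph.Walk.length_concat, hW]

lemma exists_walk_cdist (hG : G'.Connected) (a b : V ⊕ (Fin p ⊕ Fin q)) :
    ∃ W : (attachPaths G' w p q).Walk a b, (W.length : ℤ) = cdist G' w p q a b := by
  rcases a with x | (t | s) <;> rcases b with y | (t' | s')
  · obtain ⟨W, hW⟩ := exists_walk_inl (w := w) (p := p) (q := q) hG x y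
    exact ⟨W, by rw [hW]; rfl⟩
  · obtain ⟨W1, h1⟩ := exists_walk_inl (w := w) (p := p) (q := q) hG x w
    obtain ⟨W2, h2⟩ := exists_walk_wv (G' := G') (q := q) t'.1 t'.2
    refine ⟨(W1.append W2).copy rfl (by simp), ?_⟩
    simp only [SimpleGraph.Walk.length_copy, SimpleGraph.Walk.length_append, h1, h2, cdist]
    push_cast; ring
  · obtain ⟨W1, h1⟩ := exists_walk_inl (w := w) (p := p) (q := q) hG x w
    obtain ⟨W2, h2⟩ := exists_walk_wu (G' := G') (p := p) s'.1 s'.2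
    refine ⟨(W1.append W2).copy rfl (by simp), ?_⟩
    simp only [SimpleGraph.Walk.length_copy, SimpleGraph.Walk.length_append, h1, h2, cdist]
    push_cast; ring
  · obtain ⟨W1, h1⟩ := exists_walk_inl (w := w) (p := p) (q := q) hG y w
    obtain ⟨W2, h2⟩ := exists_walk_wv (G' := G') (q := q) t.1 t.2
    refine ⟨((W1.append W2).copy rfl (by simp)).reverse, ?_⟩
    simp only [SimpleGraph.Walk.length_reverse, SimpleGraph.Walk.length_copy,
      SimpleGraph.Walk.length_append, h1, h2, cdist]
    push_cast; ring
  · rcases le_or_gt t.1 t'.1 with hle | hlt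
    · obtain ⟨W, hW⟩ := exists_walk_vseg (G' := G') (w := w) (p := p) (q := q) (t'.1 - t.1) t.1 (by omega)
      refine ⟨W.copy (congrArg (fun i => (Sum.inr (Sum.inl i) : V ⊕ (Fin p ⊕ Fin q))) (Fin.ext (by simp only [Fin.mk_val, Fin.val_mk]; try omega)))
        (congrArg (fun i => (Sum.inr (Sum.inl i) : V ⊕ (Fin p ⊕ Fin q))) (Fin.ext (by simp only [Fin.mk_val, Fin.val_mk]; try omega))), ?_⟩
      rw [SimpleGraph.Walk.length_copy, hW]
      simp only [cdist]; omega
    · obtain ⟨W, hW⟩ := exists_walk_vseg (G' := G') (w := w) (p := p) (q := q) (t.1 - t'.1) t'.1 (by omega)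
      refine ⟨(W.copy (congrArg (fun i => (Sum.inr (Sum.inl i) : V ⊕ (Fin p ⊕ Fin q))) (Fin.ext (by simp only [Fin.mk_val, Fin.val_mk]; try omega)))
        (congrArg (fun i => (Sum.inr (Sum.inl i) : V ⊕ (Fin p ⊕ Fin q))) (Fin.ext (by simp only [Fin.mk_val, Fin.val_mk]; try omega)))).reverse, ?_⟩
      rw [SimpleGraph.Walk.length_reverse, SimpleGraph.Walk.length_copy, hW]
      simp only [cdist]; omega
  · obtain ⟨W1, h1⟩ := exists_walk_wv (G' := G') (q := q) t.1 t.2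
    obtain ⟨W2, h2⟩ := exists_walk_wu (G' := G') (p := p) s'.1 s'.2
    refine ⟨W1.reverse.append W2, ?_⟩
    simp only [SimpleGraph.Walk.length_append, SimpleGraph.Walk.length_reverse, h1, h2, cdist]
    push_cast; ring
  · obtain ⟨W1, h1⟩ := exists_walk_inl (w := w) (p := p) (q := q) hG y w
    obtain ⟨W2, h2⟩ := exists_walk_wu (G' := G') (p := p) s.1 s.2
    refine ⟨((W1.append W2).copy rfl (by simp)).reverse, ?_⟩
    simp only [SimpleGraph.Walk.length_reverse, SimpleGraph.Walk.length_copy,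
      SimpleGraph.Walk.length_append, h1, h2, cdist]
    push_cast; ring
  · obtain ⟨W1, h1⟩ := exists_walk_wu (G' := G') (p := p) s.1 s.2
    obtain ⟨W2, h2⟩ := exists_walk_wv (G' := G') (q := q) t'.1 t'.2
    refine ⟨W1.reverse.append W2, ?_⟩
    simp only [SimpleGraph.Walk.length_append, SimpleGraph.Walk.length_reverse, h1, h2, cdist]
    push_cast; ring
  · rcases le_or_gt s.1 s'.1 with hle | hlt
    · obtain ⟨W, hW⟩ := exists_walk_useg (G' := G') (w := w) (p := p) (q := q) (s'.1 - s.1) s.1 (by omega)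
      refine ⟨W.copy (congrArg (fun i => (Sum.inr (Sum.inr i) : V ⊕ (Fin p ⊕ Fin q))) (Fin.ext (by simp only [Fin.mk_val, Fin.val_mk]; try omega)))
        (congrArg (fun i => (Sum.inr (Sum.inr i) : V ⊕ (Fin p ⊕ Fin q))) (Fin.ext (by simp only [Fin.mk_val, Fin.val_mk]; try omega))), ?_⟩
      rw [SimpleGraph.Walk.length_copy, hW]
      simp only [cdist]; omega
    · obtain ⟨W, hW⟩ := exists_walk_useg (G' := G') (w := w) (p := p) (q := q) (s.1 - s'.1) s'.1 (by omega)
      refine ⟨(W.copy (congrArg (fun i => (Sum.inr (Sum.inr i) : V ⊕ (Fin p ⊕ Fin q))) (Fin.ext (by simp only [Fin.mk_val, Fin.val_mk]; try omega)))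
        (congrArg (fun i => (Sum.inr (Sum.inr i) : V ⊕ (Fin p ⊕ Fin q))) (Fin.ext (by simp only [Fin.mk_val, Fin.val_mk]; try omega)))).reverse, ?_⟩
      rw [SimpleGraph.Walk.length_reverse, SimpleGraph.Walk.length_copy, hW]
      simp only [cdist]; omega

theorem dist_eq_cdist (hG : G'.Connected) (a b : V ⊕ (Fin p ⊕ Fin q)) :
    ((attachPaths G' w p q).dist a b : ℤ) = cdist G' w p q a b := by
  obtain ⟨W, hW⟩ := exists_walk_cdist (w := w) hG a b
  refine le_antisymm ?_ ?_
  · rw [← hW]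
    exact_mod_cast SimpleGraph.dist_le W
  · obtain ⟨W', hW'⟩ := (W.reachable).exists_walk_length_eq_dist
    have := cdist_walk_le (w := w) hG b W'
    rw [cdist_self, hW'] at this
    omega


/-! ### Part 2: sequences and identities -/

noncomputable def xuF {V : Type*} (k : ℕ) (X : (V ⊕ (Fin (k - 1) ⊕ Fin k)) → ℝ) (n : ℕ) : ℝ :=
  if h : n < k then X (Sum.inr (Sum.inr ⟨n, h⟩)) else 0

noncomputable def xvF {V : Type*} (w : V) (k : ℕ) (X : (V ⊕ (Fin (k - 1) ⊕ Fin k)) → ℝ) (n : ℕ) : ℝ :=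
  if n = 0 then X (Sum.inl w) else if h : n - 1 < k - 1 then X (Sum.inr (Sum.inl ⟨n - 1, h⟩)) else 0

section Fin2

variable {V : Type*} [Fintype V] {G' : SimpleGraph V} {w : V} {k : ℕ}
  {X : (V ⊕ (Fin (k - 1) ⊕ Fin k)) → ℝ} {ρ : ℝ}

lemma sum_ite_xu (hk : 2 ≤ k) (i : ℕ) (hi : i ≤ k) :
    (∑ m : Fin k, if i ≤ (m : ℕ) then X (Sum.inr (Sum.inr m)) else 0)
      = ∑ n ∈ Finset.Ico i k, xuF k X n := by
  have h1 : ∀ m : Fin k, (if i ≤ (m : ℕ) then X (Sum.inr (Sum.inr m)) else 0)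
      = (fun n : ℕ => if i ≤ n then xuF k X n else 0) (m : ℕ) := by
    intro m
    simp only [xuF, m.isLt, dif_pos, Fin.eta]
  rw [Finset.sum_congr rfl (fun m _ => h1 m),
    Fin.sum_univ_eq_sum_range (fun n : ℕ => if i ≤ n then xuF k X n else 0) k, Finset.range_eq_Ico,
    ← Finset.sum_Ico_consecutive _ (Nat.zero_le i) hi]
  have h2 : ∀ n ∈ Finset.Ico 0 i, (if i ≤ n then xuF k X n else 0) = 0 := by
    intro n hn
    rw [Finset.mem_Ico] at hn
    rw [if_neg (by omega)]
  have h3 : ∀ n ∈ Finset.Ico i k, (if i ≤ n then xuF k X n else 0) = xuF k X n := by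
    intro n hn
    rw [Finset.mem_Ico] at hn
    rw [if_pos (by omega)]
  rw [Finset.sum_congr rfl h2, Finset.sum_congr rfl h3, Finset.sum_const_zero, zero_add]

lemma sum_ite_xv (hk : 2 ≤ k) (i : ℕ) (h1i : 1 ≤ i) (hi : i ≤ k) :
    (∑ t : Fin (k - 1), if i ≤ (t : ℕ) + 1 then X (Sum.inr (Sum.inl t)) else 0)
      = ∑ n ∈ Finset.Ico i k, xvF w k X n := by
  have h1 : ∀ t : Fin (k - 1), (if i ≤ (t : ℕ) + 1 then X (Sum.inr (Sum.inl t)) else 0)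
      = (fun n : ℕ => if i ≤ n + 1 then xvF w k X (n + 1) else 0) (t : ℕ) := by
    intro t
    simp only [xvF, Nat.add_sub_cancel, Nat.succ_ne_zero, if_false, t.isLt, dif_pos, Fin.eta]
  rw [Finset.sum_congr rfl (fun t _ => h1 t),
    Fin.sum_univ_eq_sum_range (fun n : ℕ => if i ≤ n + 1 then xvF w k X (n + 1) else 0) (k - 1)]
  have h2 : (∑ n ∈ Finset.range (k - 1), (fun n : ℕ => if i ≤ n then xvF w k X n else 0) (1 + n))
      = ∑ n ∈ Finset.Ico 1 k, (if i ≤ n then xvF w k X n else 0) := by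
    rw [Finset.sum_Ico_eq_sum_range]
  have h2' : (∑ n ∈ Finset.range (k - 1), if i ≤ n + 1 then xvF w k X (n + 1) else 0)
      = ∑ n ∈ Finset.Ico 1 k, (if i ≤ n then xvF w k X n else 0) := by
    rw [← h2]
    exact Finset.sum_congr rfl (fun n _ => by rw [Nat.add_comm 1 n])
  rw [h2', ← Finset.sum_Ico_consecutive _ h1i hi]
  have h3 : ∀ n ∈ Finset.Ico 1 i, (if i ≤ n then xvF w k X n else 0) = 0 := by
    intro n hn; rw [Finset.mem_Ico] at hn; rw [if_neg (by omega)]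
  have h4 : ∀ n ∈ Finset.Ico i k, (if i ≤ n then xvF w k X n else 0) = xvF w k X n := by
    intro n hn; rw [Finset.mem_Ico] at hn; rw [if_pos (by omega)]
  rw [Finset.sum_congr rfl h3, Finset.sum_congr rfl h4, Finset.sum_const_zero, zero_add]


end Fin2

noncomputable def uIndF {V : Type*} (p q n : ℕ) : (V ⊕ (Fin p ⊕ Fin q)) → ℝ :=
  Sum.elim (fun _ => 0) (Sum.elim (fun _ => 0) (fun m => if n ≤ (m : ℕ) then 1 else 0))

noncomputable def vIndF {V : Type*} (p q n : ℕ) : (V ⊕ (Fin p ⊕ Fin q)) → ℝ :=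
  Sum.elim (fun _ => 0) (Sum.elim (fun t => if n ≤ (t : ℕ) + 1 then 1 else 0) (fun _ => 0))

section Fin3

variable {V : Type*} [Fintype V] {G' : SimpleGraph V} {w : V} {p q : ℕ}

lemma sum_uIndF_mul (X : (V ⊕ (Fin p ⊕ Fin q)) → ℝ) (n : ℕ) :
    ∑ z, uIndF p q n z * X z
      = ∑ m : Fin q, if n ≤ (m : ℕ) then X (Sum.inr (Sum.inr m)) else 0 := by
  rw [Fintype.sum_sum_type, Fintype.sum_sum_type]
  simp [uIndF, ite_mul]

lemma sum_vIndF_mul (X : (V ⊕ (Fin p ⊕ Fin q)) → ℝ) (n : ℕ) :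
    ∑ z, vIndF p q n z * X z
      = ∑ t : Fin p, if n ≤ (t : ℕ) + 1 then X (Sum.inr (Sum.inl t)) else 0 := by
  rw [Fintype.sum_sum_type, Fintype.sum_sum_type]
  simp [vIndF, ite_mul]

end Fin3

section Fin4

variable {V : Type*} [Fintype V] {G' : SimpleGraph V} {w : V} {k : ℕ}
  {X : (V ⊕ (Fin (k - 1) ⊕ Fin k)) → ℝ} {ρ : ℝ}

lemma idUstep (hG : G'.Connected) (hk : 2 ≤ k)
    (row : ∀ a, ∑ z, ((attachPaths G' w (k - 1) k).dist a z : ℝ) * X z = ρ * X a)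
    (n : ℕ) (hn : n + 1 < k) :
    ρ * (xuF k X (n + 1) - xuF k X n)
      = (∑ z, X z) - 2 * ∑ m ∈ Finset.Ico (n + 1) k, xuF k X m := by
  set a : V ⊕ (Fin (k - 1) ⊕ Fin k) := Sum.inr (Sum.inr ⟨n + 1, hn⟩) with ha_def
  set b : V ⊕ (Fin (k - 1) ⊕ Fin k) := Sum.inr (Sum.inr ⟨n, by omega⟩) with hb_def
  have key : ∀ z, ((attachPaths G' w (k - 1) k).dist a z : ℝ)
      = ((attachPaths G' w (k - 1) k).dist b z : ℝ) + 1 - 2 * uIndF (k - 1) k (n + 1) z := by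
    intro z
    have da := dist_eq_cdist (w := w) hG a z
    have db := dist_eq_cdist (w := w) hG b z
    have ca : ((attachPaths G' w (k - 1) k).dist a z : ℝ) = ((cdist G' w (k - 1) k a z : ℤ) : ℝ) := by
      exact_mod_cast congrArg Int.cast da
    have cb : ((attachPaths G' w (k - 1) k).dist b z : ℝ) = ((cdist G' w (k - 1) k b z : ℤ) : ℝ) := by
      exact_mod_cast congrArg Int.cast db
    rw [ca, cb, ha_def, hb_def]
    rcases z with x | (t | m)
    · simp only [cdist, uIndF, Sum.elim_inl]
      push_cast
      ring
    · simp only [cdist, uIndF, Sum.elim_inr, Sum.elim_inl]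
      push_cast
      ring
    · simp only [cdist, uIndF, Sum.elim_inr]
      rcases le_or_gt (n + 1) (m : ℕ) with hm | hm
      · rw [if_pos hm]
        have h2 : ((((n : ℤ) + 1) - ((m : ℕ) : ℤ)).natAbs : ℤ)
            = (((n : ℤ) - ((m : ℕ) : ℤ)).natAbs : ℤ) - 1 := by omega
        have h3 := congrArg (fun z : ℤ => (z : ℝ)) h2
        push_cast at h3 ⊢
        linarith
      · rw [if_neg (by omega)]
        have h2 : ((((n : ℤ) + 1) - ((m : ℕ) : ℤ)).natAbs : ℤ)
            = (((n : ℤ) - ((m : ℕ) : ℤ)).natAbs : ℤ) + 1 := by omega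
        have h3 := congrArg (fun z : ℤ => (z : ℝ)) h2
        push_cast at h3 ⊢
        linarith
  have ha := row a
  have hb := row b
  have expand : ∑ z, ((attachPaths G' w (k - 1) k).dist a z : ℝ) * X z
      = ∑ z, (((attachPaths G' w (k - 1) k).dist b z : ℝ) * X z
          + X z - 2 * (uIndF (k - 1) k (n + 1) z * X z)) := by
    refine Finset.sum_congr rfl fun z _ => ?_
    rw [key z]
    ring
  rw [expand] at ha
  rw [Finset.sum_sub_distrib, Finset.sum_add_distrib, ← Finset.mul_sum, sum_uIndF_mul,
    sum_ite_xu hk (n + 1) (by omega), hb] at ha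
  have hxa : xuF k X (n + 1) = X a := by
    rw [ha_def]; simp only [xuF]; rw [dif_pos hn]
  have hxb : xuF k X n = X b := by
    rw [hb_def]; simp only [xuF]; rw [dif_pos (show n < k by omega)]
  rw [hxa, hxb]
  linarith [ha]


lemma idU0 (hG : G'.Connected) (hk : 2 ≤ k)
    (row : ∀ a, ∑ z, ((attachPaths G' w (k - 1) k).dist a z : ℝ) * X z = ρ * X a) :
    ρ * (xuF k X 0 - xvF w k X 0)
      = (∑ z, X z) - 2 * ∑ m ∈ Finset.Ico 0 k, xuF k X m := by
  set a : V ⊕ (Fin (k - 1) ⊕ Fin k) := Sum.inr (Sum.inr ⟨0, by omega⟩) with ha_def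
  set b : V ⊕ (Fin (k - 1) ⊕ Fin k) := Sum.inl w with hb_def
  have key : ∀ z, ((attachPaths G' w (k - 1) k).dist a z : ℝ)
      = ((attachPaths G' w (k - 1) k).dist b z : ℝ) + 1 - 2 * uIndF (k - 1) k 0 z := by
    intro z
    have da := dist_eq_cdist (w := w) hG a z
    have db := dist_eq_cdist (w := w) hG b z
    have ca : ((attachPaths G' w (k - 1) k).dist a z : ℝ) = ((cdist G' w (k - 1) k a z : ℤ) : ℝ) := by
      exact_mod_cast congrArg Int.cast da
    have cb : ((attachPaths G' w (k - 1) k).dist b z : ℝ) = ((cdist G' w (k - 1) k b z : ℤ) : ℝ) := by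
      exact_mod_cast congrArg Int.cast db
    rw [ca, cb, ha_def, hb_def]
    rcases z with x | (t | m)
    · simp only [cdist, uIndF, Sum.elim_inl, SimpleGraph.dist_comm (u := w) (v := x)]
      push_cast
      ring
    · simp only [cdist, uIndF, Sum.elim_inr, Sum.elim_inl, SimpleGraph.dist_self]
      push_cast
      ring
    · simp only [cdist, uIndF, Sum.elim_inr, SimpleGraph.dist_self]
      rw [if_pos (Nat.zero_le _)]
      have h2 : ((((0 : ℤ)) - ((m : ℕ) : ℤ)).natAbs : ℤ) = (m : ℕ) := by omega
      have h3 := congrArg (fun z : ℤ => (z : ℝ)) h2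
      push_cast at h3 ⊢
      linarith
  have ha := row a
  have hb := row b
  have expand : ∑ z, ((attachPaths G' w (k - 1) k).dist a z : ℝ) * X z
      = ∑ z, (((attachPaths G' w (k - 1) k).dist b z : ℝ) * X z
          + X z - 2 * (uIndF (k - 1) k 0 z * X z)) := by
    refine Finset.sum_congr rfl fun z _ => ?_
    rw [key z]
    ring
  rw [expand] at ha
  rw [Finset.sum_sub_distrib, Finset.sum_add_distrib, ← Finset.mul_sum, sum_uIndF_mul,
    sum_ite_xu hk 0 (by omega), hb] at ha
  have hxa : xuF k X 0 = X a := by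
    rw [ha_def]; simp only [xuF]; rw [dif_pos (show 0 < k by omega)]
  have hxb : xvF w k X 0 = X b := by
    rw [hb_def]; simp [xvF]
  rw [hxa, hxb]
  linarith [ha]

lemma idVstep (hG : G'.Connected) (hk : 2 ≤ k)
    (row : ∀ a, ∑ z, ((attachPaths G' w (k - 1) k).dist a z : ℝ) * X z = ρ * X a)
    (n : ℕ) (hn : n + 1 ≤ k - 1) :
    ρ * (xvF w k X (n + 1) - xvF w k X n)
      = (∑ z, X z) - 2 * ∑ m ∈ Finset.Ico (n + 1) k, xvF w k X m := by
  rcases n with _ | j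
  · -- n = 0 : b = inl w
    set a : V ⊕ (Fin (k - 1) ⊕ Fin k) := Sum.inr (Sum.inl ⟨0, by omega⟩) with ha_def
    set b : V ⊕ (Fin (k - 1) ⊕ Fin k) := Sum.inl w with hb_def
    have key : ∀ z, ((attachPaths G' w (k - 1) k).dist a z : ℝ)
        = ((attachPaths G' w (k - 1) k).dist b z : ℝ) + 1 - 2 * vIndF (k - 1) k 1 z := by
      intro z
      have da := dist_eq_cdist (w := w) hG a z
      have db := dist_eq_cdist (w := w) hG b z
      have ca : ((attachPaths G' w (k - 1) k).dist a z : ℝ)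
          = ((cdist G' w (k - 1) k a z : ℤ) : ℝ) := by exact_mod_cast congrArg Int.cast da
      have cb : ((attachPaths G' w (k - 1) k).dist b z : ℝ)
          = ((cdist G' w (k - 1) k b z : ℤ) : ℝ) := by exact_mod_cast congrArg Int.cast db
      rw [ca, cb, ha_def, hb_def]
      rcases z with x | (t | m)
      · simp only [cdist, vIndF, Sum.elim_inl, SimpleGraph.dist_comm (u := w) (v := x)]
        push_cast
        ring
      · simp only [cdist, vIndF, Sum.elim_inr, Sum.elim_inl, SimpleGraph.dist_self]
        rw [if_pos (by omega)]
        have h2 : ((((0 : ℤ)) - ((t : ℕ) : ℤ)).natAbs : ℤ) = (t : ℕ) := by omega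
        have h3 := congrArg (fun z : ℤ => (z : ℝ)) h2
        push_cast at h3 ⊢
        linarith
      · simp only [cdist, vIndF, Sum.elim_inr, SimpleGraph.dist_self]
        push_cast
        ring
    have ha := row a
    have hb := row b
    have expand : ∑ z, ((attachPaths G' w (k - 1) k).dist a z : ℝ) * X z
        = ∑ z, (((attachPaths G' w (k - 1) k).dist b z : ℝ) * X z
            + X z - 2 * (vIndF (k - 1) k 1 z * X z)) := by
      refine Finset.sum_congr rfl fun z _ => ?_
      rw [key z]
      ring
    rw [expand] at ha
    rw [Finset.sum_sub_distrib, Finset.sum_add_distrib, ← Finset.mul_sum, sum_vIndF_mul,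
      sum_ite_xv (w := w) hk 1 le_rfl (by omega), hb] at ha
    have hxa : xvF w k X 1 = X a := by
      rw [ha_def]; simp only [xvF]
      rw [if_neg (by omega), dif_pos (show 1 - 1 < k - 1 by omega)]
    have hxb : xvF w k X 0 = X b := by
      rw [hb_def]; simp [xvF]
    rw [hxa, hxb]
    linarith [ha]
  · -- n = j+1 : b = arm vertex j
    have hj1 : j + 1 < k - 1 := by omega
    set a : V ⊕ (Fin (k - 1) ⊕ Fin k) := Sum.inr (Sum.inl ⟨j + 1, hj1⟩) with ha_def
    set b : V ⊕ (Fin (k - 1) ⊕ Fin k) := Sum.inr (Sum.inl ⟨j, by omega⟩) with hb_def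
    have key : ∀ z, ((attachPaths G' w (k - 1) k).dist a z : ℝ)
        = ((attachPaths G' w (k - 1) k).dist b z : ℝ) + 1 - 2 * vIndF (k - 1) k (j + 2) z := by
      intro z
      have da := dist_eq_cdist (w := w) hG a z
      have db := dist_eq_cdist (w := w) hG b z
      have ca : ((attachPaths G' w (k - 1) k).dist a z : ℝ)
          = ((cdist G' w (k - 1) k a z : ℤ) : ℝ) := by exact_mod_cast congrArg Int.cast da
      have cb : ((attachPaths G' w (k - 1) k).dist b z : ℝ)
          = ((cdist G' w (k - 1) k b z : ℤ) : ℝ) := by exact_mod_cast congrArg Int.cast db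
      rw [ca, cb, ha_def, hb_def]
      rcases z with x | (t | m)
      · simp only [cdist, vIndF, Sum.elim_inl]
        push_cast
        ring
      · simp only [cdist, vIndF, Sum.elim_inr, Sum.elim_inl]
        rcases le_or_gt (j + 2) ((t : ℕ) + 1) with hm | hm
        · rw [if_pos hm]
          have h2 : ((((j : ℤ) + 1) - ((t : ℕ) : ℤ)).natAbs : ℤ)
              = (((j : ℤ) - ((t : ℕ) : ℤ)).natAbs : ℤ) - 1 := by omega
          have h3 := congrArg (fun z : ℤ => (z : ℝ)) h2
          push_cast at h3 ⊢
          linarith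
        · rw [if_neg (by omega)]
          have h2 : ((((j : ℤ) + 1) - ((t : ℕ) : ℤ)).natAbs : ℤ)
              = (((j : ℤ) - ((t : ℕ) : ℤ)).natAbs : ℤ) + 1 := by omega
          have h3 := congrArg (fun z : ℤ => (z : ℝ)) h2
          push_cast at h3 ⊢
          linarith
      · simp only [cdist, vIndF, Sum.elim_inr]
        push_cast
        ring
    have ha := row a
    have hb := row b
    have expand : ∑ z, ((attachPaths G' w (k - 1) k).dist a z : ℝ) * X z
        = ∑ z, (((attachPaths G' w (k - 1) k).dist b z : ℝ) * X z
            + X z - 2 * (vIndF (k - 1) k (j + 2) z * X z)) := by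
      refine Finset.sum_congr rfl fun z _ => ?_
      rw [key z]
      ring
    rw [expand] at ha
    rw [Finset.sum_sub_distrib, Finset.sum_add_distrib, ← Finset.mul_sum, sum_vIndF_mul,
      sum_ite_xv (w := w) hk (j + 2) (by omega) (by omega), hb] at ha
    have hxa : xvF w k X (j + 2) = X a := by
      rw [ha_def]; simp only [xvF]
      rw [if_neg (by omega), dif_pos (show j + 2 - 1 < k - 1 by omega)]
      rfl
    have hxb : xvF w k X (j + 1) = X b := by
      rw [hb_def]; simp only [xvF]
      rw [if_neg (by omega), dif_pos (show j + 1 - 1 < k - 1 by omega)]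
      rfl
    rw [hxa, hxb]
    linarith [ha]


lemma teleAB (hk : 2 ≤ k) (n : ℕ) (hn : n ≤ k - 1) :
    (∑ m ∈ Finset.Ico n k, xuF k X m) - ∑ m ∈ Finset.Ico (n + 1) k, xvF w k X m
      = xuF k X (k - 1) - ∑ m ∈ Finset.Ico n (k - 1), (xvF w k X (m + 1) - xuF k X m) := by
  have h1 : ∑ m ∈ Finset.Ico n k, xuF k X m
      = (∑ m ∈ Finset.Ico n (k - 1), xuF k X m) + xuF k X (k - 1) := by
    rw [show Finset.Ico n k = Finset.Ico n ((k - 1) + 1) from by congr 1; omega]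
    exact Finset.sum_Ico_succ_top hn _
  have h2 : ∑ m ∈ Finset.Ico (n + 1) k, xvF w k X m
      = ∑ m ∈ Finset.Ico n (k - 1), xvF w k X (m + 1) := by
    rw [Finset.sum_Ico_eq_sum_range, Finset.sum_Ico_eq_sum_range]
    rw [show k - (n + 1) = k - 1 - n by omega]
    exact Finset.sum_congr rfl (fun i _ => by rw [show n + 1 + i = n + i + 1 by omega])
  rw [h1, h2, Finset.sum_sub_distrib]
  ring

end Fin4

lemma seqPosIncr (ρ U : ℝ) (hρ : 0 < ρ) (hU : 0 < U) (K : ℕ) (hK : 1 ≤ K) (g : ℕ → ℝ)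
    (g0 : g 0 = 0)
    (rec : ∀ m, m + 2 ≤ K → ρ * (g (m + 2) - 2 * g (m + 1) + g m) = 2 * g (m + 1))
    (term : ∀ m, m + 1 = K → ρ * (g (m + 1) - g m) = 2 * U - 2 * g (m + 1)) :
    ∀ n, n + 1 ≤ K → 0 < g (n + 1) := by
  by_cases h0 : 0 < g 1
  · have claim : ∀ m, m + 1 ≤ K → g m < g (m + 1) ∧ 0 < g (m + 1) := by
      intro m
      induction m with
      | zero => exact fun _ => ⟨by rw [g0]; exact h0, h0⟩
      | succ j ih =>
        intro hj
        have hprev := ih (by omega)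
        have hrec := rec j (by omega)
        have key : g (j + 1) < g (j + 2) := by
          by_contra hc
          push_neg at hc
          have e1 : 0 < ρ * (g (j + 1) - g j) := mul_pos hρ (by linarith [hprev.1])
          have e2 : 0 ≤ ρ * (g (j + 1) - g (j + 2)) := mul_nonneg hρ.le (by linarith)
          nlinarith [hprev.2]
        exact ⟨key, lt_trans hprev.2 key⟩
    exact fun n hn => (claim n hn).2
  · push_neg at h0
    exfalso
    have claim : ∀ m, m + 1 ≤ K → g (m + 1) ≤ g m ∧ g (m + 1) ≤ 0 := by
      intro m
      induction m with
      | zero => exact fun _ => ⟨by rw [g0]; exact h0, h0⟩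
      | succ j ih =>
        intro hj
        have hprev := ih (by omega)
        have hrec := rec j (by omega)
        have key : g (j + 2) ≤ g (j + 1) := by
          by_contra hc
          push_neg at hc
          have e1 : 0 ≤ ρ * (g j - g (j + 1)) := mul_nonneg hρ.le (by linarith [hprev.1])
          have e2 : 0 < ρ * (g (j + 2) - g (j + 1)) := mul_pos hρ (by linarith)
          nlinarith [hprev.2]
        exact ⟨key, le_trans key hprev.2⟩
    obtain ⟨m, hm⟩ : ∃ m, m + 1 = K := ⟨K - 1, by omega⟩
    have hterm := term m hm
    have hc := claim m (by omega)
    nlinarith [hc.1, hc.2, mul_nonneg hρ.le (sub_nonneg.mpr hc.1), hU]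

lemma seqPosDown (ρ : ℝ) (hρ : 0 < ρ) (K : ℕ) (hK : 1 ≤ K) (g : ℕ → ℝ)
    (rec : ∀ m, m + 2 ≤ K → ρ * (g (m + 2) - 2 * g (m + 1) + g m) = 2 * g (m + 1))
    (term : ∀ m, m + 1 = K → ρ * (g (m + 1) - g m) = -2 * g (m + 1))
    (notallneg : ¬ (∀ i, i ≤ K → g i ≤ 0)) :
    ∀ i, i ≤ K → 0 < g i := by
  have hrec' : ∀ j, j + 2 ≤ K →
      ρ * (g (K - (j + 2)) - 2 * g (K - (j + 1)) + g (K - j)) = 2 * g (K - (j + 1)) := by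
    intro j hj
    have h := rec (K - j - 2) (by omega)
    rw [show K - j = (K - j - 2) + 2 by omega, show K - (j + 1) = (K - j - 2) + 1 by omega,
      show K - (j + 2) = K - j - 2 by omega]
    linarith [h]
  have hterm' : ρ * (g K - g (K - 1)) = -2 * g K := by
    have h := term (K - 1) (by omega)
    rwa [show K - 1 + 1 = K by omega] at h
  by_cases hneg : g K ≤ 0
  · exfalso
    apply notallneg
    have claim : ∀ j, j + 1 ≤ K → g (K - (j + 1)) ≤ g (K - j) ∧ g (K - j) ≤ 0 := by
      intro j
      induction j with
      | zero =>
        intro _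
        have key : g (K - 1) ≤ g K := by
          by_contra hc
          push_neg at hc
          have e1 : 0 < ρ * (g (K - 1) - g K) := mul_pos hρ (by linarith)
          nlinarith [hterm', hneg]
        rw [show K - 0 = K by omega]
        exact ⟨key, hneg⟩
      | succ j ih =>
        intro hj
        have hprev := ih (by omega)
        have hrec := hrec' j (by omega)
        have key : g (K - (j + 2)) ≤ g (K - (j + 1)) := by
          by_contra hc
          push_neg at hc
          have e1 : 0 ≤ ρ * (g (K - j) - g (K - (j + 1))) := mul_nonneg hρ.le (by linarith [hprev.1])
          have e2 : 0 < ρ * (g (K - (j + 2)) - g (K - (j + 1))) := mul_pos hρ (by linarith)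
          have h2 : g (K - (j + 1)) ≤ 0 := le_trans hprev.1 hprev.2
          linarith [e1, e2, hrec, h2]
        exact ⟨key, le_trans hprev.1 hprev.2⟩
    intro i hi
    rcases Nat.eq_or_lt_of_le hi with rfl | hlt
    · exact hneg
    · obtain ⟨j, hj⟩ : ∃ j, j + 1 = K - i := ⟨K - i - 1, by omega⟩
      have hc := claim j (by omega)
      have : g (K - (j + 1)) ≤ 0 := le_trans hc.1 hc.2
      rwa [show K - (j + 1) = i by omega] at this
  · push_neg at hneg
    have claim2 : ∀ j, j + 1 ≤ K → g (K - j) ≤ g (K - (j + 1)) ∧ 0 < g (K - j) := by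
      intro j
      induction j with
      | zero =>
        intro _
        rw [show K - 0 = K by omega]
        have key : g K ≤ g (K - 1) := by
          by_contra hc
          push_neg at hc
          have e1 : 0 < ρ * (g K - g (K - 1)) := mul_pos hρ (by linarith)
          nlinarith [hterm', hneg]
        exact ⟨key, hneg⟩
      | succ j ih =>
        intro hj
        have hprev := ih (by omega)
        have hrec := hrec' j (by omega)
        have h2 : 0 < g (K - (j + 1)) := lt_of_lt_of_le hprev.2 hprev.1
        have key : g (K - (j + 1)) ≤ g (K - (j + 2)) := by
          by_contra hc
          push_neg at hc
          have e1 : 0 ≤ ρ * (g (K - (j + 1)) - g (K - j)) := mul_nonneg hρ.le (by linarith [hprev.1])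
          have e2 : 0 < ρ * (g (K - (j + 1)) - g (K - (j + 2))) := mul_pos hρ (by linarith)
          linarith [e1, e2, hrec, h2]
        exact ⟨key, h2⟩
    intro i hi
    rcases Nat.eq_or_lt_of_le hi with rfl | hlt
    · exact hneg
    · obtain ⟨j, hj⟩ : ∃ j, j + 1 = K - i := ⟨K - i - 1, by omega⟩
      have hc := claim2 j (by omega)
      have : 0 < g (K - (j + 1)) := lt_of_lt_of_le hc.2 hc.1
      rwa [show K - (j + 1) = i by omega] at this

end AP

open AP

/-- Lemma 2.3 (first part): in the graph obtained by attaching two pendant paths of lengths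
`k-1` and `k` to a vertex `w` of a nontrivial connected graph, the distance Perron vector
satisfies `x_{v_1} < x_{u_1}` and `x_{u_{i-1}} < x_{v_i} < x_{u_i}` for `2 ≤ i ≤ k`
(1-based indices). -/
theorem stmt3 {V : Type*} [Fintype V] (G' : SimpleGraph V) (hV : Nontrivial V)
    (hG : G'.Connected) (w : V) (k : ℕ) (hk : 2 ≤ k)
    (X : (V ⊕ (Fin (k - 1) ⊕ Fin k)) → ℝ)
    (hX : IsDistPerronVector (attachPaths G' w (k - 1) k) X) :
    X (armV w k ⟨0, by omega⟩) < X (armU w k ⟨0, by omega⟩) ∧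
    ∀ i : ℕ, ∀ _h2 : 2 ≤ i, ∀ _hik : i ≤ k,
      X (armU w k ⟨i - 2, by omega⟩) < X (armV w k ⟨i - 1, by omega⟩) ∧
      X (armV w k ⟨i - 1, by omega⟩) < X (armU w k ⟨i - 1, by omega⟩) := by
  obtain ⟨hXpos, hXnorm, hXeig⟩ := hX
  have hk1 : 1 ≤ k - 1 := by omega
  have row : ∀ a, ∑ z, ((attachPaths G' w (k - 1) k).dist a z : ℝ) * X z
      = distSpectralRadius (attachPaths G' w (k - 1) k) * X a := by
    intro a
    have h := congrFun hXeig a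
    simp only [distMatrix, Matrix.mulVec, dotProduct, Pi.smul_apply, smul_eq_mul] at h
    exact h
  set ρ := distSpectralRadius (attachPaths G' w (k - 1) k) with hρdef
  -- positivity of ρ
  have hρ : 0 < ρ := by
    have hrow_w := row (Sum.inl w)
    set u0 : V ⊕ (Fin (k - 1) ⊕ Fin k) := Sum.inr (Sum.inr ⟨0, by omega⟩) with hu0
    have hd1 : (((attachPaths G' w (k - 1) k).dist (Sum.inl w) u0 : ℕ) : ℝ) = 1 := by
      have h := AP.dist_eq_cdist (w := w) hG (Sum.inl w) u0
      rw [hu0] at h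
      simp only [AP.cdist, SimpleGraph.dist_self] at h
      have h2 : (attachPaths G' w (k - 1) k).dist (Sum.inl w) u0 = 1 := by
        rw [hu0]; omega
      rw [h2]
      norm_num
    have hsingle : (((attachPaths G' w (k - 1) k).dist (Sum.inl w) u0 : ℕ) : ℝ) * X u0
        ≤ ∑ z, (((attachPaths G' w (k - 1) k).dist (Sum.inl w) z : ℕ) : ℝ) * X z :=
      Finset.single_le_sum
        (f := fun z => (((attachPaths G' w (k - 1) k).dist (Sum.inl w) z : ℕ) : ℝ) * X z)
        (fun z _ => mul_nonneg (Nat.cast_nonneg _) (hXpos z).le) (Finset.mem_univ _)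
    rw [hd1, one_mul, hrow_w] at hsingle
    by_contra hcon
    push_neg at hcon
    nlinarith [hXpos u0, hXpos (Sum.inl w), hsingle,
      mul_nonneg (neg_nonneg.mpr hcon) (hXpos (Sum.inl w)).le]
  have hU : 0 < xuF k X (k - 1) := by
    simp only [AP.xuF]
    rw [dif_pos (show k - 1 < k by omega)]
    exact hXpos _
  -- the sequence α
  set α : ℕ → ℝ := fun n => xuF k X n - xvF w k X n with hαdef
  have Eαs : ∀ n, n + 1 ≤ k - 1 →
      ρ * (α (n + 1) - α n) = -2 * ∑ t ∈ Finset.Ico (n + 1) k, α t := by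
    intro n hn
    have h1 := AP.idUstep (w := w) hG hk row n (by omega)
    have h2 := AP.idVstep hG hk row n hn
    have h3 : ∑ t ∈ Finset.Ico (n + 1) k, α t
        = (∑ t ∈ Finset.Ico (n + 1) k, xuF k X t) - ∑ t ∈ Finset.Ico (n + 1) k, xvF w k X t := by
      simp only [hαdef]
      exact Finset.sum_sub_distrib _ _
    simp only [hαdef]
    linarith
  have αrec : ∀ m, m + 2 ≤ k - 1 →
      ρ * (α (m + 2) - 2 * α (m + 1) + α m) = 2 * α (m + 1) := by
    intro m hm
    have h1 := Eαs m (by omega)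
    have h2 := Eαs (m + 1) (by omega)
    have h3 : ∑ t ∈ Finset.Ico (m + 1) k, α t
        = α (m + 1) + ∑ t ∈ Finset.Ico (m + 2) k, α t :=
      Finset.sum_eq_sum_Ico_succ_bot (by omega) _
    linarith
  have αterm : ∀ m, m + 1 = k - 1 → ρ * (α (m + 1) - α m) = -2 * α (m + 1) := by
    intro m hm
    have h1 := Eαs m (by omega)
    have h2 : ∑ t ∈ Finset.Ico (m + 1) k, α t = α (m + 1) := by
      rw [show Finset.Ico (m + 1) k = {m + 1} from by
        rw [show k = m + 2 by omega]
        exact Nat.Ico_succ_singleton _]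
      exact Finset.sum_singleton _ _
    rw [h1, h2]
  -- not all α can be ≤ 0
  have notallneg : ¬ (∀ i, i ≤ k - 1 → α i ≤ 0) := by
    intro hall
    have hA0 : ∑ m : Fin k, X (Sum.inr (Sum.inr m)) = ∑ n ∈ Finset.Ico 0 k, xuF k X n := by
      rw [← AP.sum_ite_xu (X := X) hk 0 (by omega)]
      exact Finset.sum_congr rfl (fun m _ => (if_pos (Nat.zero_le _)).symm)
    have hB1 : ∑ t : Fin (k - 1), X (Sum.inr (Sum.inl t)) = ∑ n ∈ Finset.Ico 1 k, xvF w k X n := by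
      rw [← AP.sum_ite_xv (w := w) (X := X) hk 1 le_rfl (by omega)]
      exact Finset.sum_congr rfl (fun t _ => (if_pos (by omega)).symm)
    have hS : (∑ z, X z) = (∑ x : V, X (Sum.inl x))
        + ((∑ t : Fin (k - 1), X (Sum.inr (Sum.inl t))) + ∑ m : Fin k, X (Sum.inr (Sum.inr m))) := by
      rw [Fintype.sum_sum_type, Fintype.sum_sum_type]
    have hcompare : ∑ n ∈ Finset.Ico 0 k, xuF k X n ≤ ∑ n ∈ Finset.Ico 0 k, xvF w k X n := by
      refine Finset.sum_le_sum (fun n hn => ?_)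
      rw [Finset.mem_Ico] at hn
      have := hall n (by omega)
      simp only [hαdef] at this
      linarith
    have hsplit : ∑ n ∈ Finset.Ico 0 k, xvF w k X n
        = xvF w k X 0 + ∑ n ∈ Finset.Ico 1 k, xvF w k X n :=
      Finset.sum_eq_sum_Ico_succ_bot (by omega) _
    have hxv0 : xvF w k X 0 = X (Sum.inl w) := by simp [AP.xvF]
    haveI := hV
    letI := Classical.decEq V
    obtain ⟨x0, hx0⟩ := exists_ne w
    have hwx : X (Sum.inl w) + X (Sum.inl x0) ≤ ∑ x : V, X (Sum.inl x) := by
      calc X (Sum.inl w) + X (Sum.inl x0)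
          = ∑ x ∈ ({w, x0} : Finset V), X (Sum.inl x) := by
            rw [Finset.sum_pair (Ne.symm hx0)]
        _ ≤ _ := Finset.sum_le_sum_of_subset_of_nonneg (Finset.subset_univ _)
            (fun x _ _ => (hXpos _).le)
    have hEα0 := AP.idU0 (w := w) hG hk row
    have h00 := hall 0 (by omega)
    simp only [hαdef] at h00
    have hmul : 0 ≤ ρ * -(xuF k X 0 - xvF w k X 0) := mul_nonneg hρ.le (by linarith)
    have hpos0 : 0 < X (Sum.inl x0) := hXpos _
    nlinarith [hEα0, hS, hA0, hB1, hcompare, hsplit, hxv0, hwx, hpos0, hmul]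
  have αpos := AP.seqPosDown ρ hρ (k - 1) hk1 α αrec αterm notallneg
  -- the sequence β / γ
  set β : ℕ → ℝ := fun n => xvF w k X (n + 1) - xuF k X n with hβdef
  set γ : ℕ → ℝ := fun n => Nat.rec (0 : ℝ) (fun m _ => β m) n with hγdef
  have γ0 : γ 0 = 0 := rfl
  have γs : ∀ m, γ (m + 1) = β m := fun _ => rfl
  have Eβ0 : ρ * β 0 = 2 * xuF k X (k - 1) - 2 * ∑ m ∈ Finset.Ico 0 (k - 1), β m := by
    have h1 := AP.idVstep hG hk row 0 hk1
    have h2 := AP.idU0 (w := w) hG hk row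
    have h3 := AP.teleAB (w := w) (X := X) hk 0 (by omega)
    have h4 : ∑ m ∈ Finset.Ico 0 (k - 1), β m
        = ∑ m ∈ Finset.Ico 0 (k - 1), (xvF w k X (m + 1) - xuF k X m) :=
      Finset.sum_congr rfl (fun m _ => by simp only [hβdef])
    simp only [hβdef]
    rw [h4] at *
    linarith
  have Eβs : ∀ n, n + 2 ≤ k - 1 →
      ρ * (β (n + 1) - β n) = 2 * xuF k X (k - 1) - 2 * ∑ m ∈ Finset.Ico (n + 1) (k - 1), β m := by
    intro n hn
    have h1 := AP.idVstep hG hk row (n + 1) (by omega)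
    have h2 := AP.idUstep (w := w) hG hk row n (by omega)
    have h3 := AP.teleAB (w := w) (X := X) hk (n + 1) (by omega)
    have h4 : ∑ m ∈ Finset.Ico (n + 1) (k - 1), β m
        = ∑ m ∈ Finset.Ico (n + 1) (k - 1), (xvF w k X (m + 1) - xuF k X m) :=
      Finset.sum_congr rfl (fun m _ => by simp only [hβdef])
    simp only [hβdef]
    rw [h4]
    linarith
  have γrec : ∀ m, m + 2 ≤ k - 1 →
      ρ * (γ (m + 2) - 2 * γ (m + 1) + γ m) = 2 * γ (m + 1) := by
    intro m hm
    rcases m with _ | j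
    · rw [γ0, γs, γs]
      have h1 := Eβs 0 (by omega)
      have h2 := Eβ0
      have h3 : ∑ m ∈ Finset.Ico 0 (k - 1), β m = β 0 + ∑ m ∈ Finset.Ico 1 (k - 1), β m :=
        Finset.sum_eq_sum_Ico_succ_bot (by omega) _
      linarith
    · rw [γs, γs, γs]
      have h1 := Eβs (j + 1) (by omega)
      have h2 := Eβs j (by omega)
      have h3 : ∑ m ∈ Finset.Ico (j + 1) (k - 1), β m
          = β (j + 1) + ∑ m ∈ Finset.Ico (j + 2) (k - 1), β m :=
        Finset.sum_eq_sum_Ico_succ_bot (by omega) _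
      linarith
  have γterm : ∀ m, m + 1 = k - 1 →
      ρ * (γ (m + 1) - γ m) = 2 * xuF k X (k - 1) - 2 * γ (m + 1) := by
    intro m hm
    rcases m with _ | j
    · rw [γ0, γs]
      have h2 := Eβ0
      have h3 : ∑ m ∈ Finset.Ico 0 (k - 1), β m = β 0 := by
        rw [show Finset.Ico 0 (k - 1) = {0} from by
          rw [show k - 1 = 1 by omega]
          exact Nat.Ico_succ_singleton _]
        exact Finset.sum_singleton _ _
      rw [h3] at h2
      linarith
    · rw [γs, γs]
      have h2 := Eβs j (by omega)
      have h3 : ∑ m ∈ Finset.Ico (j + 1) (k - 1), β m = β (j + 1) := by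
        rw [show Finset.Ico (j + 1) (k - 1) = {j + 1} from by
          rw [show k - 1 = j + 2 by omega]
          exact Nat.Ico_succ_singleton _]
        exact Finset.sum_singleton _ _
      rw [h3] at h2
      linarith
  have βpos := AP.seqPosIncr ρ (xuF k X (k - 1)) hρ hU (k - 1) hk1 γ γ0 γrec γterm
  -- translate to the goals
  constructor
  · have h := αpos 0 (by omega)
    simp only [hαdef] at h
    have e1 : X (armV w k ⟨0, by omega⟩) = xvF w k X 0 := by
      simp [armV, AP.xvF]
    have e2 : X (armU w k ⟨0, by omega⟩) = xuF k X 0 := by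
      simp only [armU, AP.xuF]
      rw [dif_pos (show 0 < k by omega)]
    rw [e1, e2]
    linarith
  · intro i h2i hik
    have e3 : X (armU w k ⟨i - 2, by omega⟩) = xuF k X (i - 2) := by
      simp only [armU, AP.xuF]
      rw [dif_pos (show i - 2 < k by omega)]
    have e4 : X (armV w k ⟨i - 1, by omega⟩) = xvF w k X (i - 1) := by
      simp only [armV, AP.xvF]
      rw [dif_neg (show ¬((⟨i - 1, by omega⟩ : Fin k) : ℕ) = 0 from by simp; omega)]
      rw [if_neg (by omega), dif_pos (show i - 1 - 1 < k - 1 by omega)]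
    have e5 : X (armU w k ⟨i - 1, by omega⟩) = xuF k X (i - 1) := by
      simp only [armU, AP.xuF]
      rw [dif_pos (show i - 1 < k by omega)]
    constructor
    · have hb := βpos (i - 2) (by omega)
      rw [γs] at hb
      simp only [hβdef] at hb
      rw [show i - 2 + 1 = i - 1 by omega] at hb
      rw [e3, e4]
      linarith
    · have ha := αpos (i - 1) (by omega)
      simp only [hαdef] at ha
      rw [e4, e5]
      linarith
end

section
/- In the graph of the previous setting (two pendant arms of lengths k−1 and k attached to a nontrivial connected graph), the entries of the distance Perron vector along the longer arm are strictly increasing: x_{u_1} < x_{u_2} < ⋯ < x_{u_k}, and similarly x_{v_1} < x_{v_2} < ⋯ < x_{v_k} along the shorter arm. -/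
open SimpleGraph

/-- Lipschitz functions give lower bounds on walk lengths. -/
lemma lip_walk {W : Type*} {H : SimpleGraph W} (f : W → ℤ)
    (hf : ∀ a b, H.Adj a b → |f a - f b| ≤ 1) {a b : W} (pw : H.Walk a b) :
    |f a - f b| ≤ (pw.length : ℤ) := by
  induction pw with
  | nil => simp
  | @cons x y z h pw ih =>
    have h1 := hf _ _ h
    have h2 := abs_sub_le (f x) (f y) (f z)
    simp only [Walk.length_cons]
    push_cast
    omega

lemma lip_dist {W : Type*} {H : SimpleGraph W} (f : W → ℤ)
    (hf : ∀ a b, H.Adj a b → |f a - f b| ≤ 1) {a b : W} (hr : H.Reachable a b) :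
    |f a - f b| ≤ (H.dist a b : ℤ) := by
  obtain ⟨pw, hpw⟩ := hr.exists_walk_length_eq_dist
  simpa [hpw] using lip_walk f hf pw

section
variable {V : Type*} (G : SimpleGraph V) (w : V) (p q : ℕ)

lemma adj_cases {a b : V ⊕ (Fin p ⊕ Fin q)} (h : (attachPaths G w p q).Adj a b)
    (C : Prop)
    (h1 : ∀ x y, a = Sum.inl x → b = Sum.inl y → G.Adj x y → C)
    (h2 : ∀ (i : Fin p), ((a = Sum.inl w ∧ b = Sum.inr (Sum.inl i)) ∨
        (b = Sum.inl w ∧ a = Sum.inr (Sum.inl i))) → (i : ℕ) = 0 → C)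
    (h3 : ∀ (i : Fin q), ((a = Sum.inl w ∧ b = Sum.inr (Sum.inr i)) ∨
        (b = Sum.inl w ∧ a = Sum.inr (Sum.inr i))) → (i : ℕ) = 0 → C)
    (h4 : ∀ (i j : Fin p), a = Sum.inr (Sum.inl i) → b = Sum.inr (Sum.inl j) →
        (i : ℕ) + 1 = (j : ℕ) ∨ (j : ℕ) + 1 = (i : ℕ) → C)
    (h5 : ∀ (i j : Fin q), a = Sum.inr (Sum.inr i) → b = Sum.inr (Sum.inr j) →
        (i : ℕ) + 1 = (j : ℕ) ∨ (j : ℕ) + 1 = (i : ℕ) → C) : C := by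
  rw [attachPaths, fromRel_adj] at h
  obtain ⟨hne, h | h⟩ := h <;>
  · rcases a with x | i | i <;> rcases b with y | j | j <;> dsimp only at h
    all_goals first
      | exact absurd h not_false
      | exact h1 _ _ rfl rfl h
      | exact h1 _ _ rfl rfl h.symm
      | exact h2 _ (Or.inl ⟨by rw [h.1], rfl⟩) h.2
      | exact h2 _ (Or.inr ⟨by rw [h.1], rfl⟩) h.2
      | exact h3 _ (Or.inl ⟨by rw [h.1], rfl⟩) h.2
      | exact h3 _ (Or.inr ⟨by rw [h.1], rfl⟩) h.2
      | exact h4 _ _ rfl rfl (Or.inl h)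
      | exact h4 _ _ rfl rfl (Or.inr h)
      | exact h5 _ _ rfl rfl (Or.inl h)
      | exact h5 _ _ rfl rfl (Or.inr h)

lemma adj_w_P0 (h0 : 0 < p) :
    (attachPaths G w p q).Adj (Sum.inl w) (Sum.inr (Sum.inl ⟨0, h0⟩)) := by
  rw [attachPaths, fromRel_adj]
  exact ⟨by simp, Or.inl ⟨rfl, rfl⟩⟩

lemma adj_w_U0 (h0 : 0 < q) :
    (attachPaths G w p q).Adj (Sum.inl w) (Sum.inr (Sum.inr ⟨0, h0⟩)) := by
  rw [attachPaths, fromRel_adj]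
  exact ⟨by simp, Or.inl ⟨rfl, rfl⟩⟩

lemma adj_P_succ (i : ℕ) (h : i + 1 < p) :
    (attachPaths G w p q).Adj (Sum.inr (Sum.inl ⟨i, by omega⟩))
      (Sum.inr (Sum.inl ⟨i+1, h⟩)) := by
  rw [attachPaths, fromRel_adj]
  refine ⟨by simp [Fin.ext_iff], Or.inl rfl⟩

lemma adj_U_succ (i : ℕ) (h : i + 1 < q) :
    (attachPaths G w p q).Adj (Sum.inr (Sum.inr ⟨i, by omega⟩))
      (Sum.inr (Sum.inr ⟨i+1, h⟩)) := by
  rw [attachPaths, fromRel_adj]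
  refine ⟨by simp [Fin.ext_iff], Or.inl rfl⟩

def homInl : G →g attachPaths G w p q where
  toFun := Sum.inl
  map_rel' := by
    intro a b h
    rw [attachPaths, fromRel_adj]
    exact ⟨by simp [h.ne], Or.inl h⟩

lemma walk_w_P (i : ℕ) (hi : i < p) :
    ∃ pw : (attachPaths G w p q).Walk (Sum.inl w) (Sum.inr (Sum.inl ⟨i, hi⟩)),
      pw.length = i + 1 := by
  induction i with
  | zero => exact ⟨(adj_w_P0 G w p q hi).toWalk, rfl⟩
  | succ n ih =>
    obtain ⟨pw, hpw⟩ := ih (by omega)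
    exact ⟨pw.concat (adj_P_succ G w p q n hi), by simp [Walk.length_concat, hpw]⟩

lemma walk_w_U (i : ℕ) (hi : i < q) :
    ∃ pw : (attachPaths G w p q).Walk (Sum.inl w) (Sum.inr (Sum.inr ⟨i, hi⟩)),
      pw.length = i + 1 := by
  induction i with
  | zero => exact ⟨(adj_w_U0 G w p q hi).toWalk, rfl⟩
  | succ n ih =>
    obtain ⟨pw, hpw⟩ := ih (by omega)
    exact ⟨pw.concat (adj_U_succ G w p q n hi), by simp [Walk.length_concat, hpw]⟩

lemma walk_P_P (i j : ℕ) (hij : i ≤ j) (hj : j < p) :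
    ∃ pw : (attachPaths G w p q).Walk (Sum.inr (Sum.inl ⟨i, by omega⟩))
      (Sum.inr (Sum.inl ⟨j, hj⟩)), pw.length = j - i := by
  induction j, hij using Nat.le_induction with
  | base => exact ⟨Walk.nil, by simp⟩
  | succ n hn ih =>
    obtain ⟨pw, hpw⟩ := ih (by omega)
    exact ⟨pw.concat (adj_P_succ G w p q n hj), by simp [Walk.length_concat, hpw]; omega⟩

lemma walk_U_U (i j : ℕ) (hij : i ≤ j) (hj : j < q) :
    ∃ pw : (attachPaths G w p q).Walk (Sum.inr (Sum.inr ⟨i, by omega⟩))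
      (Sum.inr (Sum.inr ⟨j, hj⟩)), pw.length = j - i := by
  induction j, hij using Nat.le_induction with
  | base => exact ⟨Walk.nil, by simp⟩
  | succ n hn ih =>
    obtain ⟨pw, hpw⟩ := ih (by omega)
    exact ⟨pw.concat (adj_U_succ G w p q n hj), by simp [Walk.length_concat, hpw]; omega⟩

lemma walk_inl (hG : G.Connected) (x y : V) :
    ∃ pw : (attachPaths G w p q).Walk (Sum.inl x) (Sum.inl y),
      pw.length = G.dist x y := by
  obtain ⟨pw, hpw⟩ := (hG x y).exists_walk_length_eq_dist
  exact ⟨pw.map (homInl G w p q), (Walk.length_map _ _).trans hpw⟩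
end
section
open SimpleGraph Finset

private def fB {V : Type*} {p q : ℕ} : V ⊕ (Fin p ⊕ Fin q) → ℤ :=
  Sum.elim (fun _ => 0) (Sum.elim (fun i => -((i : ℤ) + 1)) (fun i => (i : ℤ) + 1))

private def fP {V : Type*} {p q : ℕ} : V ⊕ (Fin p ⊕ Fin q) → ℤ :=
  Sum.elim (fun _ => 0) (Sum.elim (fun i => (i : ℤ)) (fun _ => 0))

private def fU {V : Type*} {p q : ℕ} : V ⊕ (Fin p ⊕ Fin q) → ℤ :=
  Sum.elim (fun _ => 0) (Sum.elim (fun _ => 0) (fun i => (i : ℤ)))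

private noncomputable def gx {V : Type*} (G : SimpleGraph V) (w : V) {p q : ℕ} (x : V) :
    V ⊕ (Fin p ⊕ Fin q) → ℤ :=
  Sum.elim (fun y => (G.dist x y : ℤ))
    (Sum.elim (fun i => (G.dist x w : ℤ) + i + 1) (fun i => (G.dist x w : ℤ) + i + 1))

variable {V : Type*} (G : SimpleGraph V) (w : V) (p q : ℕ)

private lemma fB_lip : ∀ a b, (attachPaths G w p q).Adj a b → |fB a - fB b| ≤ 1 := by
  intro a b h
  refine adj_cases G w p q h _ ?_ ?_ ?_ ?_ ?_
  · rintro x y rfl rfl _; simp [fB]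
  · rintro i (⟨rfl, rfl⟩ | ⟨rfl, rfl⟩) h0 <;>
      (simp only [fB, Sum.elim_inr, Sum.elim_inl]; rw [abs_le]; omega)
  · rintro i (⟨rfl, rfl⟩ | ⟨rfl, rfl⟩) h0 <;>
      (simp only [fB, Sum.elim_inr, Sum.elim_inl]; rw [abs_le]; omega)
  · rintro i j rfl rfl hij
    simp only [fB, Sum.elim_inr, Sum.elim_inl]; rw [abs_le]; omega
  · rintro i j rfl rfl hij
    simp only [fB, Sum.elim_inr, Sum.elim_inl]; rw [abs_le]; omega

private lemma fP_lip : ∀ a b, (attachPaths G w p q).Adj a b → |fP a - fP b| ≤ 1 := by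
  intro a b h
  refine adj_cases G w p q h _ ?_ ?_ ?_ ?_ ?_
  · rintro x y rfl rfl _; simp [fP]
  · rintro i (⟨rfl, rfl⟩ | ⟨rfl, rfl⟩) h0 <;>
      (simp only [fP, Sum.elim_inr, Sum.elim_inl]; rw [abs_le]; omega)
  · rintro i (⟨rfl, rfl⟩ | ⟨rfl, rfl⟩) h0 <;>
      (simp only [fP, Sum.elim_inr, Sum.elim_inl]; rw [abs_le]; omega)
  · rintro i j rfl rfl hij
    simp only [fP, Sum.elim_inr, Sum.elim_inl]; rw [abs_le]; omega
  · rintro i j rfl rfl hij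
    simp only [fP, Sum.elim_inr, Sum.elim_inl]; rw [abs_le]; omega

private lemma fU_lip : ∀ a b, (attachPaths G w p q).Adj a b → |fU a - fU b| ≤ 1 := by
  intro a b h
  refine adj_cases G w p q h _ ?_ ?_ ?_ ?_ ?_
  · rintro x y rfl rfl _; simp [fU]
  · rintro i (⟨rfl, rfl⟩ | ⟨rfl, rfl⟩) h0 <;>
      (simp only [fU, Sum.elim_inr, Sum.elim_inl]; rw [abs_le]; omega)
  · rintro i (⟨rfl, rfl⟩ | ⟨rfl, rfl⟩) h0 <;>
      (simp only [fU, Sum.elim_inr, Sum.elim_inl]; rw [abs_le]; omega)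
  · rintro i j rfl rfl hij
    simp only [fU, Sum.elim_inr, Sum.elim_inl]; rw [abs_le]; omega
  · rintro i j rfl rfl hij
    simp only [fU, Sum.elim_inr, Sum.elim_inl]; rw [abs_le]; omega

private lemma gx_lip (hG : G.Connected) (x : V) :
    ∀ a b, (attachPaths G w p q).Adj a b → |gx G w x a - gx G w x b| ≤ 1 := by
  intro a b h
  refine adj_cases G w p q h _ ?_ ?_ ?_ ?_ ?_
  · rintro y z rfl rfl hyz
    have h1 : G.dist x z ≤ G.dist x y + 1 :=
      le_trans (hG.dist_triangle) (by gcongr; exact SimpleGraph.dist_le hyz.toWalk)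
    have h2 : G.dist x y ≤ G.dist x z + 1 :=
      le_trans (hG.dist_triangle) (by gcongr; exact SimpleGraph.dist_le hyz.symm.toWalk)
    simp only [gx, Sum.elim_inl]; rw [abs_le]; omega
  · rintro i (⟨rfl, rfl⟩ | ⟨rfl, rfl⟩) h0 <;>
      (simp only [gx, Sum.elim_inr, Sum.elim_inl]; rw [abs_le]; omega)
  · rintro i (⟨rfl, rfl⟩ | ⟨rfl, rfl⟩) h0 <;>
      (simp only [gx, Sum.elim_inr, Sum.elim_inl]; rw [abs_le]; omega)
  · rintro i j rfl rfl hij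
    simp only [gx, Sum.elim_inr, Sum.elim_inl]; rw [abs_le]; omega
  · rintro i j rfl rfl hij
    simp only [gx, Sum.elim_inr, Sum.elim_inl]; rw [abs_le]; omega

lemma dist_inl_inl (hG : G.Connected) (x y : V) :
    (attachPaths G w p q).dist (Sum.inl x) (Sum.inl y) = G.dist x y := by
  obtain ⟨pw, hpw⟩ := walk_inl G w p q hG x y
  refine le_antisymm (hpw ▸ SimpleGraph.dist_le pw) ?_
  have := lip_dist (gx G w x) (gx_lip G w p q hG x) ⟨pw⟩
  simp only [gx, Sum.elim_inl] at this
  rw [SimpleGraph.dist_self, abs_le] at this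
  omega

lemma dist_inl_P (hG : G.Connected) (x : V) (i : ℕ) (hi : i < p) :
    (attachPaths G w p q).dist (Sum.inl x) (Sum.inr (Sum.inl ⟨i, hi⟩)) =
      G.dist x w + i + 1 := by
  obtain ⟨pw1, hpw1⟩ := walk_inl G w p q hG x w
  obtain ⟨pw2, hpw2⟩ := walk_w_P G w p q i hi
  refine le_antisymm ?_ ?_
  · have := SimpleGraph.dist_le (pw1.append pw2)
    rw [Walk.length_append, hpw1, hpw2] at this
    omega
  · have := lip_dist (gx G w x) (gx_lip G w p q hG x) ⟨pw1.append pw2⟩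
    simp only [gx, Sum.elim_inl, Sum.elim_inr] at this
    rw [SimpleGraph.dist_self, abs_le] at this
    omega

lemma dist_inl_U (hG : G.Connected) (x : V) (i : ℕ) (hi : i < q) :
    (attachPaths G w p q).dist (Sum.inl x) (Sum.inr (Sum.inr ⟨i, hi⟩)) =
      G.dist x w + i + 1 := by
  obtain ⟨pw1, hpw1⟩ := walk_inl G w p q hG x w
  obtain ⟨pw2, hpw2⟩ := walk_w_U G w p q i hi
  refine le_antisymm ?_ ?_
  · have := SimpleGraph.dist_le (pw1.append pw2)
    rw [Walk.length_append, hpw1, hpw2] at this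
    omega
  · have := lip_dist (gx G w x) (gx_lip G w p q hG x) ⟨pw1.append pw2⟩
    simp only [gx, Sum.elim_inl, Sum.elim_inr] at this
    rw [SimpleGraph.dist_self, abs_le] at this
    omega

lemma dist_P_P (i j : ℕ) (hij : i ≤ j) (hj : j < p) :
    (attachPaths G w p q).dist (Sum.inr (Sum.inl ⟨i, by omega⟩))
      (Sum.inr (Sum.inl ⟨j, hj⟩)) = j - i := by
  obtain ⟨pw, hpw⟩ := walk_P_P G w p q i j hij hj
  refine le_antisymm (hpw ▸ SimpleGraph.dist_le pw) ?_
  have := lip_dist fP (fP_lip G w p q) ⟨pw⟩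
  simp only [fP, Sum.elim_inr, Sum.elim_inl] at this
  rw [abs_le] at this
  omega

lemma dist_U_U (i j : ℕ) (hij : i ≤ j) (hj : j < q) :
    (attachPaths G w p q).dist (Sum.inr (Sum.inr ⟨i, by omega⟩))
      (Sum.inr (Sum.inr ⟨j, hj⟩)) = j - i := by
  obtain ⟨pw, hpw⟩ := walk_U_U G w p q i j hij hj
  refine le_antisymm (hpw ▸ SimpleGraph.dist_le pw) ?_
  have := lip_dist fU (fU_lip G w p q) ⟨pw⟩
  simp only [fU, Sum.elim_inr, Sum.elim_inl] at this
  rw [abs_le] at this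
  omega

lemma dist_P_U (i : ℕ) (hi : i < p) (j : ℕ) (hj : j < q) :
    (attachPaths G w p q).dist (Sum.inr (Sum.inl ⟨i, hi⟩))
      (Sum.inr (Sum.inr ⟨j, hj⟩)) = i + j + 2 := by
  obtain ⟨pw1, hpw1⟩ := walk_w_P G w p q i hi
  obtain ⟨pw2, hpw2⟩ := walk_w_U G w p q j hj
  refine le_antisymm ?_ ?_
  · have := SimpleGraph.dist_le (pw1.reverse.append pw2)
    rw [Walk.length_append, Walk.length_reverse, hpw1, hpw2] at this
    omega
  · have := lip_dist fB (fB_lip G w p q) ⟨pw1.reverse.append pw2⟩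
    simp only [fB, Sum.elim_inr, Sum.elim_inl] at this
    rw [abs_le] at this
    omega
end

section
open SimpleGraph Finset
variable {V : Type*} (G : SimpleGraph V) (w : V) (p q : ℕ)

lemma dist_inl_inl' (hG : G.Connected) (x y : V) :
    (attachPaths G w p q).dist (Sum.inl x) (Sum.inl y) = G.dist x y :=
  dist_inl_inl G w p q hG x y

lemma dist_inl_P' (hG : G.Connected) (x : V) (i : Fin p) :
    (attachPaths G w p q).dist (Sum.inl x) (Sum.inr (Sum.inl i)) =
      G.dist x w + i + 1 := by
  simpa using dist_inl_P G w p q hG x i i.2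

lemma dist_inl_U' (hG : G.Connected) (x : V) (i : Fin q) :
    (attachPaths G w p q).dist (Sum.inl x) (Sum.inr (Sum.inr i)) =
      G.dist x w + i + 1 := by
  simpa using dist_inl_U G w p q hG x i i.2

lemma dist_P_P' (i j : Fin p) (hij : (i : ℕ) ≤ j) :
    (attachPaths G w p q).dist (Sum.inr (Sum.inl i)) (Sum.inr (Sum.inl j)) =
      (j : ℕ) - i := by
  simpa using dist_P_P G w p q i j hij j.2

lemma dist_U_U' (i j : Fin q) (hij : (i : ℕ) ≤ j) :
    (attachPaths G w p q).dist (Sum.inr (Sum.inr i)) (Sum.inr (Sum.inr j)) =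
      (j : ℕ) - i := by
  simpa using dist_U_U G w p q i j hij j.2

lemma dist_P_U' (i : Fin p) (j : Fin q) :
    (attachPaths G w p q).dist (Sum.inr (Sum.inl i)) (Sum.inr (Sum.inr j)) =
      (i : ℕ) + j + 2 := by
  simpa using dist_P_U G w p q i i.2 j j.2
end


section
open SimpleGraph Finset
variable {V : Type*} (G : SimpleGraph V) (w : V) (p q : ℕ)

lemma dist_U_inl' (hG : G.Connected) (x : V) (i : Fin q) :
    (attachPaths G w p q).dist (Sum.inr (Sum.inr i)) (Sum.inl x) =
      G.dist x w + i + 1 := by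
  rw [SimpleGraph.dist_comm]; exact dist_inl_U' G w p q hG x i

lemma dist_P_inl' (hG : G.Connected) (x : V) (i : Fin p) :
    (attachPaths G w p q).dist (Sum.inr (Sum.inl i)) (Sum.inl x) =
      G.dist x w + i + 1 := by
  rw [SimpleGraph.dist_comm]; exact dist_inl_P' G w p q hG x i

lemma dist_U_P' (i : Fin q) (j : Fin p) :
    (attachPaths G w p q).dist (Sum.inr (Sum.inr i)) (Sum.inr (Sum.inl j)) =
      (j : ℕ) + i + 2 := by
  rw [SimpleGraph.dist_comm]; exact dist_P_U' G w p q j i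

lemma dist_U_U'' (i j : Fin q) :
    (attachPaths G w p q).dist (Sum.inr (Sum.inr i)) (Sum.inr (Sum.inr j)) =
      if (j : ℕ) ≤ i then (i : ℕ) - j else (j : ℕ) - i := by
  rcases le_or_gt (j : ℕ) i with h | h
  · rw [if_pos h, SimpleGraph.dist_comm]
    exact dist_U_U' G w p q j i h
  · rw [if_neg (by omega)]
    exact dist_U_U' G w p q i j (by omega)

lemma dist_P_P'' (i j : Fin p) :
    (attachPaths G w p q).dist (Sum.inr (Sum.inl i)) (Sum.inr (Sum.inl j)) =
      if (j : ℕ) ≤ i then (i : ℕ) - j else (j : ℕ) - i := by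
  rcases le_or_gt (j : ℕ) i with h | h
  · rw [if_pos h, SimpleGraph.dist_comm]
    exact dist_P_P' G w p q j i h
  · rw [if_neg (by omega)]
    exact dist_P_P' G w p q i j (by omega)
end


section
open Finset
private lemma Ico_shift (k : ℕ) (g : ℕ → ℝ) :
    ∑ t ∈ Ico 1 k, g t = ∑ j : Fin (k-1), g ((j : ℕ) + 1) := by
  rw [Finset.sum_Ico_eq_sum_range,
    ← Fin.sum_univ_eq_sum_range (fun r => g (1 + r)) (k-1)]
  exact Finset.sum_congr rfl fun j _ => by rw [Nat.add_comm]
end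

section
open Finset
private lemma signed_split (a b c : ℕ) (hab : a ≤ b) (hbc : b ≤ c) (f : ℕ → ℝ) :
    ∑ t ∈ Ico a c, (if t < b then 1 else -1) * f t
      = ∑ t ∈ Ico a c, f t - 2 * ∑ t ∈ Ico b c, f t := by
  rw [← Finset.sum_Ico_consecutive (fun t => (if t < b then 1 else -1) * f t) hab hbc,
    ← Finset.sum_Ico_consecutive f hab hbc]
  have h1 : ∑ t ∈ Ico a b, (if t < b then 1 else -1) * f t = ∑ t ∈ Ico a b, f t := by
    refine Finset.sum_congr rfl fun t ht => ?_
    rw [if_pos (Finset.mem_Ico.mp ht).2]; ring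
  have h2 : ∑ t ∈ Ico b c, (if t < b then 1 else -1) * f t = -∑ t ∈ Ico b c, f t := by
    rw [← Finset.sum_neg_distrib]
    refine Finset.sum_congr rfl fun t ht => ?_
    rw [if_neg (by have := (Finset.mem_Ico.mp ht).1; omega)]; ring
  rw [h1, h2]; ring
end

section
open Finset
variable {k : ℕ} {ρ R S : ℝ} {u v : ℕ → ℝ}

private lemma key_aux (hk : 2 ≤ k) (hρ : 0 < ρ) (hR : 0 < R)
    (hu : ∀ m, m < k → 0 < u m) (hv : ∀ m, m < k → 0 < v m)
    (hS : S = R + v 0 + (∑ m ∈ range k, u m) + (∑ m ∈ Ico 1 k, v m))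
    (hIU : ∀ i, i + 1 < k → ρ * (u (i+1) - u i) = S - 2 * ∑ m ∈ Ico (i+1) k, u m)
    (hIV : ∀ i, i + 1 < k → ρ * (v (i+1) - v i) = S - 2 * ∑ m ∈ Ico (i+1) k, v m)
    (hAnc : ρ * (u 0 - v 0) = R - ∑ m ∈ range k, (u m - v m)) :
    (∀ i, i + 1 < k → u i < u (i+1)) ∧ (∀ i, i + 1 < k → v i < v (i+1)) := by
  obtain ⟨s, hs_def⟩ : ∃ s : ℕ → ℝ, s = fun j => ∑ m ∈ Ico j k, (u m - v m) :=
    ⟨_, rfl⟩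
  have hs_step : ∀ j, j < k → s j = (u j - v j) + s (j+1) := by
    intro j hj
    simp only [hs_def]
    rw [Finset.sum_eq_sum_Ico_succ_bot hj]
  have hs_k : s k = 0 := by simp [hs_def]
  have hsplit : ∀ (f : ℕ → ℝ) j, j < k →
      ∑ m ∈ Ico j k, f m = f j + ∑ m ∈ Ico (j+1) k, f m := by
    intro f j hj
    rw [Finset.sum_eq_sum_Ico_succ_bot hj]
  have hsub : ∀ j, s j = (∑ m ∈ Ico j k, u m) - ∑ m ∈ Ico j k, v m := by
    intro j; simp [hs_def, Finset.sum_sub_distrib]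
  have hr0 : ∀ f : ℕ → ℝ, ∑ m ∈ range k, f m = f 0 + ∑ m ∈ Ico 1 k, f m := by
    intro f
    rw [range_eq_Ico, Finset.sum_eq_sum_Ico_succ_bot (by omega : 0 < k)]
  have hRec : ∀ j, j + 1 < k → ρ * s j + ρ * s (j+2) = (2*ρ+2) * s (j+1) := by
    intro j hj
    have h1 := hIU j hj
    have h2 := hIV j hj
    have e1 := hs_step j (by omega)
    have e2 : s (j+1) = (u (j+1) - v (j+1)) + s (j+2) := by
      rw [show j+2 = j+1+1 by omega]
      exact hs_step (j+1) hj
    have e3 := hsub (j+1)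
    linear_combination ρ * e1 - ρ * e2 - h1 + h2 - 2 * e3
  have hs01 : s 0 = u 0 - v 0 + s 1 := by
    have h := hs_step 0 (by omega)
    norm_num at h
    exact h
  have hAnc' : ρ * (s 0 - s 1) = R - s 0 := by
    have e2 : s 0 = ∑ m ∈ range k, (u m - v m) := by
      rw [hs_def, range_eq_Ico]
    rw [show s 0 - s 1 = u 0 - v 0 by linarith, hAnc, e2]
  -- descending escape
  have desc : ∀ n j, j + n = k → 1 ≤ j → s j < 0 → s j < s (j - 1) → False := by
    intro n
    induction n with
    | zero =>
      intro j hj _ hneg _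
      rw [show j = k by omega] at hneg
      linarith
    | succ n ih =>
      intro j hj hj1 hneg hlt
      have hrec := hRec (j-1) (by omega)
      rw [show j - 1 + 1 = j by omega, show j - 1 + 2 = j + 1 by omega] at hrec
      have h1 : s (j+1) < s j := by nlinarith [mul_pos hρ (sub_pos.mpr hlt)]
      have h2 : s (j+1) < 0 := by
        nlinarith [mul_pos hρ (sub_pos.mpr hlt), mul_neg_of_pos_of_neg hρ hneg]
      exact ih (j+1) (by omega) (by omega) h2 (by rwa [Nat.add_sub_cancel])
  -- ascending escape
  have asc : ∀ n j, j + n = k → 1 ≤ j → s (j-1) ≤ s j → 0 < s (j-1) → False := by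
    intro n
    induction n with
    | zero =>
      intro j hj _ hle hpos
      have hjk : j = k := by omega
      rw [hjk] at hle hpos
      rw [hs_k] at hle
      linarith
    | succ n ih =>
      intro j hj hj1 hle hpos
      have hrec := hRec (j-1) (by omega)
      rw [show j - 1 + 1 = j by omega, show j - 1 + 2 = j + 1 by omega] at hrec
      have hsj : 0 < s j := lt_of_lt_of_le hpos hle
      have h1 : s j ≤ s (j+1) := by
        nlinarith [mul_nonneg hρ.le (sub_nonneg.mpr hle), mul_pos hρ hsj]
      exact ih (j+1) (by omega) (by omega) (by rwa [Nat.add_sub_cancel])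
        (by rw [Nat.add_sub_cancel]; exact hsj)
  have s0_pos : 0 < s 0 := by
    by_contra h
    push_neg at h
    have h1 : s 1 < 0 := by nlinarith
    have h2 : s 1 < s 0 := by nlinarith
    exact desc (k-1) 1 (by omega) le_rfl h1 (by simpa using h2)
  have spos : ∀ j, j < k → 0 < s j := by
    intro j
    induction j with
    | zero => intro _; exact s0_pos
    | succ n ih =>
      intro hn1
      by_contra h
      push_neg at h
      have hprev : 0 < s n := ih (by omega)
      have hrec := hRec n hn1
      have h1 : s (n+2) < 0 := by nlinarith [mul_pos hρ hprev]
      have h2 : s (n+2) < s (n+1) := by nlinarith [mul_pos hρ hprev]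
      exact desc (k - (n+2)) (n+2) (by omega) (by omega) h1
        (by rw [show n + 2 - 1 = n + 1 by omega]; exact h2)
  have eps_pos : ∀ j, j < k → s (j+1) < s j := by
    intro j hj
    by_contra h
    push_neg at h
    rcases eq_or_lt_of_le (by omega : j + 1 ≤ k) with h' | h'
    · have := spos j hj
      rw [h', hs_k] at h
      linarith
    · exact asc (k - (j+1)) (j+1) (by omega) (by omega)
        (by rwa [Nat.add_sub_cancel]) (by rw [Nat.add_sub_cancel]; exact spos j hj)
  have uv_gap : ∀ j, j < k → v j < u j := by
    intro j hj
    have h1 := eps_pos j hj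
    have h2 := hs_step j hj
    linarith
  have s1_eq : s 1 = R - (ρ+1) * (u 0 - v 0) := by
    linear_combination hAnc' - (ρ+1) * hs01
  have ubase : u 0 < u 1 := by
    have h1 := hIU 0 (by omega)
    norm_num at h1
    rw [hS, hr0 u] at h1
    -- h1 : ρ(u1 - u0) = R + v0 + (u 0 + ΣIco1 u) + ΣIco1 v - 2 ΣIco1 u
    have e2 := hsub 1
    have hg := uv_gap 0 (by omega)
    have hQ : 0 < (ρ+1) * (u 0 - v 0) := mul_pos (by linarith) (by linarith)
    have hu0 := hu 0 (by omega)
    have hv0 := hv 0 (by omega)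
    have hP : 0 < ρ * (u 1 - u 0) := by linarith [s1_eq]
    nlinarith [hP]
  have vbase : v 0 < v 1 := by
    have h1 := hIV 0 (by omega)
    norm_num at h1
    rw [hS, hr0 u] at h1
    have e2 := hsub 1
    have hs1 : 0 < s 1 := spos 1 (by omega)
    have hu0 := hu 0 (by omega)
    have hv0 := hv 0 (by omega)
    have hP : 0 < ρ * (v 1 - v 0) := by linarith
    nlinarith [hP]
  have mono_u : ∀ i, i + 1 < k → u i < u (i+1) := by
    intro i
    induction i with
    | zero => intro _; exact ubase
    | succ n ih =>
      intro hn
      have hprev := ih (by omega)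
      have h1 := hIU n (by omega)
      have h2 := hIU (n+1) hn
      have e1 := hsplit u (n+1) (by omega)
      have hun := hu (n+1) (by omega)
      have hp : 0 < ρ * (u (n+1) - u n) := mul_pos hρ (sub_pos.mpr hprev)
      have hP : 0 < ρ * (u (n+1+1) - u (n+1)) := by linarith
      nlinarith [hP]
  have mono_v : ∀ i, i + 1 < k → v i < v (i+1) := by
    intro i
    induction i with
    | zero => intro _; exact vbase
    | succ n ih =>
      intro hn
      have hprev := ih (by omega)
      have h1 := hIV n (by omega)
      have h2 := hIV (n+1) hn
      have e1 := hsplit v (n+1) (by omega)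
      have hvn := hv (n+1) (by omega)
      have hp : 0 < ρ * (v (n+1) - v n) := mul_pos hρ (sub_pos.mpr hprev)
      have hP : 0 < ρ * (v (n+1+1) - v (n+1)) := by linarith
      nlinarith [hP]
  exact ⟨mono_u, mono_v⟩
end

/-- Lemma 2.3 (second part): the entries of the distance Perron vector are strictly
increasing along each of the two pendant arms: `x_{u_1} < x_{u_2} < ⋯ < x_{u_k}` and
`x_{v_1} < x_{v_2} < ⋯ < x_{v_k}`. -/
theorem stmt4 {V : Type*} [Fintype V] (G' : SimpleGraph V) (hV : Nontrivial V)
    (hG : G'.Connected) (w : V) (k : ℕ) (hk : 2 ≤ k)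
    (X : (V ⊕ (Fin (k - 1) ⊕ Fin k)) → ℝ)
    (hX : IsDistPerronVector (attachPaths G' w (k - 1) k) X) :
    ∀ i j : Fin k, i < j →
      X (armU w k i) < X (armU w k j) ∧ X (armV w k i) < X (armV w k j) := by
  classical
  obtain ⟨hpos, -, heig⟩ := hX
  set H := attachPaths G' w (k - 1) k with hH
  set ρ := distSpectralRadius H with hρdef
  have hrow : ∀ a, ∑ z, ((H.dist a z : ℝ) * X z) = ρ * X a := by
    intro a
    have h := congrFun heig a
    simp only [Matrix.mulVec, dotProduct, distMatrix, Pi.smul_apply,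
      smul_eq_mul] at h
    exact h
  have hdiff : ∀ a b, ρ * (X a - X b)
      = ∑ z, (((H.dist a z : ℝ) - (H.dist b z : ℝ)) * X z) := by
    intro a b
    rw [mul_sub, ← hrow a, ← hrow b, ← Finset.sum_sub_distrib]
    exact Finset.sum_congr rfl fun z _ => by ring
  -- the two sequences
  obtain ⟨u, hu_def⟩ : ∃ u : ℕ → ℝ,
      u = fun n => if h : n < k then X (Sum.inr (Sum.inr ⟨n, h⟩)) else 0 := ⟨_, rfl⟩
  obtain ⟨v, hv_def⟩ : ∃ v : ℕ → ℝ,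
      v = fun n => if n = 0 then X (Sum.inl w)
        else if h : n - 1 < k - 1 then X (Sum.inr (Sum.inl ⟨n - 1, h⟩)) else 0 := ⟨_, rfl⟩
  have hu_eq' : ∀ n (h : n < k), u n = X (Sum.inr (Sum.inr ⟨n, h⟩)) := by
    intro n h; simp only [hu_def]; rw [dif_pos h]
  have hv0 : v 0 = X (Sum.inl w) := by simp [hv_def]
  have hv_eq' : ∀ n (hn : n ≠ 0) (h : n - 1 < k - 1),
      v n = X (Sum.inr (Sum.inl ⟨n - 1, h⟩)) := by
    intro n hn h; simp only [hv_def]; rw [if_neg hn, dif_pos h]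
  have hu_eq : ∀ j : Fin k, u (j : ℕ) = X (Sum.inr (Sum.inr j)) := by
    intro j; rw [hu_eq' _ j.isLt]
  have hv_eq : ∀ j : Fin (k-1), v ((j : ℕ) + 1) = X (Sum.inr (Sum.inl j)) := by
    intro j
    have h : (j : ℕ) + 1 - 1 < k - 1 := by have := j.isLt; omega
    rw [hv_eq' _ (by omega) h]
    have e : (⟨(j : ℕ) + 1 - 1, h⟩ : Fin (k - 1)) = j :=
      Fin.ext (show (j : ℕ) + 1 - 1 = (j : ℕ) by omega)
    rw [e]
  have hu_pos : ∀ m, m < k → 0 < u m := fun m hm => by rw [hu_eq' m hm]; exact hpos _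
  have hv_pos : ∀ m, m < k → 0 < v m := by
    intro m hm
    rcases Nat.eq_zero_or_pos m with rfl | hm0
    · rw [hv0]; exact hpos _
    · rw [hv_eq' m (by omega) (by omega)]; exact hpos _
  -- R
  obtain ⟨R, hR_def⟩ : ∃ R : ℝ, R = ∑ y ∈ Finset.univ.erase w, X (Sum.inl y) := ⟨_, rfl⟩
  have hRpos : 0 < R := by
    rw [hR_def]
    refine Finset.sum_pos (fun y _ => hpos _) ?_
    obtain ⟨y, hy⟩ := exists_ne w
    exact ⟨y, Finset.mem_erase.mpr ⟨hy, Finset.mem_univ y⟩⟩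
  have hVsum : ∑ y : V, X (Sum.inl y) = v 0 + R := by
    rw [hv0, hR_def, ← Finset.sum_erase_add Finset.univ _ (Finset.mem_univ w)]
    ring
  have hUsum : ∑ j : Fin k, X (Sum.inr (Sum.inr j)) = ∑ m ∈ Finset.range k, u m := by
    rw [← Fin.sum_univ_eq_sum_range u k]
    exact Finset.sum_congr rfl fun j _ => (hu_eq j).symm
  have hPsum : ∑ j : Fin (k-1), X (Sum.inr (Sum.inl j)) = ∑ t ∈ Finset.Ico 1 k, v t := by
    rw [Finset.sum_Ico_eq_sum_range]
    have hkk : k - 1 = k - 1 := rfl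
    rw [show ∑ t ∈ Finset.range (k-1), v (1 + t) = ∑ j : Fin (k-1), v (1 + (j:ℕ)) from
      (Fin.sum_univ_eq_sum_range (fun t => v (1 + t)) (k-1)).symm]
    refine Finset.sum_congr rfl fun j _ => ?_
    rw [show 1 + (j : ℕ) = (j : ℕ) + 1 by omega, hv_eq j]
  -- positivity of the spectral radius
  have hρpos : 0 < ρ := by
    have hr := hrow (Sum.inl w)
    have h0k : 0 < k := by omega
    have h1 : 0 < ∑ z, (H.dist (Sum.inl w) z : ℝ) * X z := by
      refine Finset.sum_pos' (fun z _ => mul_nonneg (Nat.cast_nonneg _) (hpos z).le)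
        ⟨Sum.inr (Sum.inr ⟨0, h0k⟩), Finset.mem_univ _, ?_⟩
      have hd : H.dist (Sum.inl w) (Sum.inr (Sum.inr ⟨0, h0k⟩)) = 1 := by
        rw [hH, dist_inl_U' G' w (k-1) k hG w ⟨0, h0k⟩]
        simp
      rw [hd]
      simpa using hpos (Sum.inr (Sum.inr ⟨0, h0k⟩))
    nlinarith [hpos (Sum.inl w), hr, h1]
  -- the three identity families
  have hIU : ∀ i, i + 1 < k → ρ * (u (i+1) - u i)
      = (R + v 0 + (∑ m ∈ Finset.range k, u m) + (∑ t ∈ Finset.Ico 1 k, v t))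
        - 2 * ∑ m ∈ Finset.Ico (i+1) k, u m := by
    intro i hik
    have hik' : i < k := by omega
    have hd := hdiff (Sum.inr (Sum.inr ⟨i+1, hik⟩)) (Sum.inr (Sum.inr ⟨i, hik'⟩))
    simp only [Fintype.sum_sum_type] at hd
    have hXa : X (Sum.inr (Sum.inr (⟨i+1, hik⟩ : Fin k))) = u (i+1) := (hu_eq' _ hik).symm
    have hXb : X (Sum.inr (Sum.inr (⟨i, hik'⟩ : Fin k))) = u i := (hu_eq' _ hik').symm
    have hA : ∑ y : V, ((H.dist (Sum.inr (Sum.inr ⟨i+1, hik⟩)) (Sum.inl y) : ℝ)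
          - (H.dist (Sum.inr (Sum.inr ⟨i, hik'⟩)) (Sum.inl y) : ℝ)) * X (Sum.inl y)
        = ∑ y : V, X (Sum.inl y) := by
      refine Finset.sum_congr rfl fun y _ => ?_
      have e : H.dist (Sum.inr (Sum.inr (⟨i+1, hik⟩ : Fin k))) (Sum.inl y)
          = H.dist (Sum.inr (Sum.inr (⟨i, hik'⟩ : Fin k))) (Sum.inl y) + 1 := by
        rw [hH, dist_U_inl' G' w (k-1) k hG y, dist_U_inl' G' w (k-1) k hG y]
        dsimp only
        omega
      rw [e]
      push_cast
      ring
    have hB : ∑ j : Fin (k-1), ((H.dist (Sum.inr (Sum.inr ⟨i+1, hik⟩)) (Sum.inr (Sum.inl j)) : ℝ)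
          - (H.dist (Sum.inr (Sum.inr ⟨i, hik'⟩)) (Sum.inr (Sum.inl j)) : ℝ)) * X (Sum.inr (Sum.inl j))
        = ∑ j : Fin (k-1), X (Sum.inr (Sum.inl j)) := by
      refine Finset.sum_congr rfl fun j _ => ?_
      have e : H.dist (Sum.inr (Sum.inr (⟨i+1, hik⟩ : Fin k))) (Sum.inr (Sum.inl j))
          = H.dist (Sum.inr (Sum.inr (⟨i, hik'⟩ : Fin k))) (Sum.inr (Sum.inl j)) + 1 := by
        rw [hH, dist_U_P' G' w (k-1) k _ j, dist_U_P' G' w (k-1) k _ j]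
        dsimp only
        omega
      rw [e]
      push_cast
      ring
    have hC : ∑ j : Fin k, ((H.dist (Sum.inr (Sum.inr ⟨i+1, hik⟩)) (Sum.inr (Sum.inr j)) : ℝ)
          - (H.dist (Sum.inr (Sum.inr ⟨i, hik'⟩)) (Sum.inr (Sum.inr j)) : ℝ)) * X (Sum.inr (Sum.inr j))
        = ∑ m ∈ Finset.range k, (if m < i + 1 then 1 else -1) * u m := by
      rw [show ∑ m ∈ Finset.range k, (if m < i + 1 then 1 else -1) * u m
          = ∑ j : Fin k, (if (j:ℕ) < i + 1 then 1 else -1) * u (j:ℕ) from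
        (Fin.sum_univ_eq_sum_range (fun m => (if m < i + 1 then 1 else -1) * u m) k).symm]
      refine Finset.sum_congr rfl fun j _ => ?_
      rw [hu_eq j]
      by_cases hji : (j : ℕ) < i + 1
      · rw [if_pos hji]
        have e : H.dist (Sum.inr (Sum.inr (⟨i+1, hik⟩ : Fin k))) (Sum.inr (Sum.inr j))
            = H.dist (Sum.inr (Sum.inr (⟨i, hik'⟩ : Fin k))) (Sum.inr (Sum.inr j)) + 1 := by
          rw [hH, dist_U_U'' G' w (k-1) k _ j, dist_U_U'' G' w (k-1) k _ j]
          dsimp only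
          split_ifs <;> omega
        rw [e]; push_cast; ring
      · rw [if_neg hji]
        have e : H.dist (Sum.inr (Sum.inr (⟨i, hik'⟩ : Fin k))) (Sum.inr (Sum.inr j))
            = H.dist (Sum.inr (Sum.inr (⟨i+1, hik⟩ : Fin k))) (Sum.inr (Sum.inr j)) + 1 := by
          rw [hH, dist_U_U'' G' w (k-1) k _ j, dist_U_U'' G' w (k-1) k _ j]
          dsimp only
          split_ifs <;> omega
        rw [e]; push_cast; ring
    rw [hXa, hXb, hA, hB, hC] at hd
    have hsigned := signed_split 0 (i+1) k (by omega) (by omega) u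
    rw [← Finset.range_eq_Ico] at hsigned
    linarith [hd, hVsum, hPsum, hsigned]
  have hvrange : ∑ m ∈ Finset.range k, v m = v 0 + ∑ t ∈ Finset.Ico 1 k, v t := by
    rw [Finset.range_eq_Ico, Finset.sum_eq_sum_Ico_succ_bot (by omega : 0 < k)]
  have hAnc : ρ * (u 0 - v 0) = R - ∑ m ∈ Finset.range k, (u m - v m) := by
    have h0k : 0 < k := by omega
    have hd := hdiff (Sum.inr (Sum.inr ⟨0, h0k⟩)) (Sum.inl w)
    simp only [Fintype.sum_sum_type] at hd
    have hXa : X (Sum.inr (Sum.inr (⟨0, h0k⟩ : Fin k))) = u 0 := (hu_eq' _ h0k).symm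
    have hXb : X (Sum.inl w) = v 0 := hv0.symm
    have hA : ∑ y : V, ((H.dist (Sum.inr (Sum.inr ⟨0, h0k⟩)) (Sum.inl y) : ℝ)
          - (H.dist (Sum.inl w) (Sum.inl y) : ℝ)) * X (Sum.inl y)
        = ∑ y : V, X (Sum.inl y) := by
      refine Finset.sum_congr rfl fun y _ => ?_
      have e : H.dist (Sum.inr (Sum.inr (⟨0, h0k⟩ : Fin k))) (Sum.inl y)
          = H.dist (Sum.inl w) (Sum.inl y) + 1 := by
        rw [hH, dist_U_inl' G' w (k-1) k hG y, dist_inl_inl' G' w (k-1) k hG w y,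
          SimpleGraph.dist_comm (G := G')]
        dsimp only
      rw [e]; push_cast; ring
    have hB : ∑ j : Fin (k-1), ((H.dist (Sum.inr (Sum.inr ⟨0, h0k⟩)) (Sum.inr (Sum.inl j)) : ℝ)
          - (H.dist (Sum.inl w) (Sum.inr (Sum.inl j)) : ℝ)) * X (Sum.inr (Sum.inl j))
        = ∑ j : Fin (k-1), X (Sum.inr (Sum.inl j)) := by
      refine Finset.sum_congr rfl fun j _ => ?_
      have e : H.dist (Sum.inr (Sum.inr (⟨0, h0k⟩ : Fin k))) (Sum.inr (Sum.inl j))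
          = H.dist (Sum.inl w) (Sum.inr (Sum.inl j)) + 1 := by
        rw [hH, dist_U_P' G' w (k-1) k _ j, dist_inl_P' G' w (k-1) k hG w j,
          SimpleGraph.dist_self]
        dsimp only
        omega
      rw [e]; push_cast; ring
    have hC : ∑ j : Fin k, ((H.dist (Sum.inr (Sum.inr ⟨0, h0k⟩)) (Sum.inr (Sum.inr j)) : ℝ)
          - (H.dist (Sum.inl w) (Sum.inr (Sum.inr j)) : ℝ)) * X (Sum.inr (Sum.inr j))
        = -∑ j : Fin k, X (Sum.inr (Sum.inr j)) := by
      rw [← Finset.sum_neg_distrib]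
      refine Finset.sum_congr rfl fun j _ => ?_
      have e : H.dist (Sum.inl w) (Sum.inr (Sum.inr j))
          = H.dist (Sum.inr (Sum.inr (⟨0, h0k⟩ : Fin k))) (Sum.inr (Sum.inr j)) + 1 := by
        rw [hH, dist_inl_U' G' w (k-1) k hG w j, dist_U_U'' G' w (k-1) k _ j,
          SimpleGraph.dist_self]
        dsimp only
        split_ifs <;> omega
      rw [e]; push_cast; ring
    rw [hXa, hXb, hA, hB, hC] at hd
    have hsub2 : ∑ m ∈ Finset.range k, (u m - v m)
        = (∑ m ∈ Finset.range k, u m) - ∑ m ∈ Finset.range k, v m :=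
      Finset.sum_sub_distrib _ _
    linarith [hd, hVsum, hPsum, hUsum, hsub2, hvrange]
  have hIV : ∀ i, i + 1 < k → ρ * (v (i+1) - v i)
      = (R + v 0 + (∑ m ∈ Finset.range k, u m) + (∑ t ∈ Finset.Ico 1 k, v t))
        - 2 * ∑ t ∈ Finset.Ico (i+1) k, v t := by
    intro i hik
    rcases Nat.eq_zero_or_pos i with rfl | hi0
    · -- base pair (w, P 0)
      have hp0 : 0 < k - 1 := by omega
      have hd := hdiff (Sum.inr (Sum.inl ⟨0, hp0⟩)) (Sum.inl w)
      simp only [Fintype.sum_sum_type] at hd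
      have hXa : X (Sum.inr (Sum.inl (⟨0, hp0⟩ : Fin (k-1)))) = v 1 :=
        (hv_eq' 1 (by omega) hp0).symm
      have hXb : X (Sum.inl w) = v 0 := hv0.symm
      have hA : ∑ y : V, ((H.dist (Sum.inr (Sum.inl ⟨0, hp0⟩)) (Sum.inl y) : ℝ)
            - (H.dist (Sum.inl w) (Sum.inl y) : ℝ)) * X (Sum.inl y)
          = ∑ y : V, X (Sum.inl y) := by
        refine Finset.sum_congr rfl fun y _ => ?_
        have e : H.dist (Sum.inr (Sum.inl (⟨0, hp0⟩ : Fin (k-1)))) (Sum.inl y)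
            = H.dist (Sum.inl w) (Sum.inl y) + 1 := by
          rw [hH, dist_P_inl' G' w (k-1) k hG y, dist_inl_inl' G' w (k-1) k hG w y,
            SimpleGraph.dist_comm (G := G')]
          dsimp only
        rw [e]; push_cast; ring
      have hB : ∑ j : Fin (k-1), ((H.dist (Sum.inr (Sum.inl ⟨0, hp0⟩)) (Sum.inr (Sum.inl j)) : ℝ)
            - (H.dist (Sum.inl w) (Sum.inr (Sum.inl j)) : ℝ)) * X (Sum.inr (Sum.inl j))
          = -∑ j : Fin (k-1), X (Sum.inr (Sum.inl j)) := by
        rw [← Finset.sum_neg_distrib]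
        refine Finset.sum_congr rfl fun j _ => ?_
        have e : H.dist (Sum.inl w) (Sum.inr (Sum.inl j))
            = H.dist (Sum.inr (Sum.inl (⟨0, hp0⟩ : Fin (k-1)))) (Sum.inr (Sum.inl j)) + 1 := by
          rw [hH, dist_inl_P' G' w (k-1) k hG w j, dist_P_P'' G' w (k-1) k _ j,
            SimpleGraph.dist_self]
          dsimp only
          split_ifs <;> omega
        rw [e]; push_cast; ring
      have hC : ∑ j : Fin k, ((H.dist (Sum.inr (Sum.inl ⟨0, hp0⟩)) (Sum.inr (Sum.inr j)) : ℝ)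
            - (H.dist (Sum.inl w) (Sum.inr (Sum.inr j)) : ℝ)) * X (Sum.inr (Sum.inr j))
          = ∑ j : Fin k, X (Sum.inr (Sum.inr j)) := by
        refine Finset.sum_congr rfl fun j _ => ?_
        have e : H.dist (Sum.inr (Sum.inl (⟨0, hp0⟩ : Fin (k-1)))) (Sum.inr (Sum.inr j))
            = H.dist (Sum.inl w) (Sum.inr (Sum.inr j)) + 1 := by
          rw [hH, dist_P_U' G' w (k-1) k _ j, dist_inl_U' G' w (k-1) k hG w j,
            SimpleGraph.dist_self]
        rw [e]; push_cast; ring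
      rw [hXa, hXb, hA, hB, hC] at hd
      simp only [Nat.zero_add]
      linarith [hd, hVsum, hPsum, hUsum]
    · -- pair (P (i-1), P i)
      have hiklt : i < k - 1 := by omega
      have hbl : i - 1 < k - 1 := by omega
      have hd := hdiff (Sum.inr (Sum.inl ⟨i, hiklt⟩)) (Sum.inr (Sum.inl ⟨i-1, hbl⟩))
      simp only [Fintype.sum_sum_type] at hd
      have hXa : X (Sum.inr (Sum.inl (⟨i, hiklt⟩ : Fin (k-1)))) = v (i+1) :=
        (hv_eq' (i+1) (by omega) hiklt).symm
      have hXb : X (Sum.inr (Sum.inl (⟨i-1, hbl⟩ : Fin (k-1)))) = v i :=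
        (hv_eq' i (by omega) hbl).symm
      have hA : ∑ y : V, ((H.dist (Sum.inr (Sum.inl ⟨i, hiklt⟩)) (Sum.inl y) : ℝ)
            - (H.dist (Sum.inr (Sum.inl ⟨i-1, hbl⟩)) (Sum.inl y) : ℝ)) * X (Sum.inl y)
          = ∑ y : V, X (Sum.inl y) := by
        refine Finset.sum_congr rfl fun y _ => ?_
        have e : H.dist (Sum.inr (Sum.inl (⟨i, hiklt⟩ : Fin (k-1)))) (Sum.inl y)
            = H.dist (Sum.inr (Sum.inl (⟨i-1, hbl⟩ : Fin (k-1)))) (Sum.inl y) + 1 := by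
          rw [hH, dist_P_inl' G' w (k-1) k hG y, dist_P_inl' G' w (k-1) k hG y]
          dsimp only
          omega
        rw [e]; push_cast; ring
      have hC : ∑ j : Fin k, ((H.dist (Sum.inr (Sum.inl ⟨i, hiklt⟩)) (Sum.inr (Sum.inr j)) : ℝ)
            - (H.dist (Sum.inr (Sum.inl ⟨i-1, hbl⟩)) (Sum.inr (Sum.inr j)) : ℝ)) * X (Sum.inr (Sum.inr j))
          = ∑ j : Fin k, X (Sum.inr (Sum.inr j)) := by
        refine Finset.sum_congr rfl fun j _ => ?_
        have e : H.dist (Sum.inr (Sum.inl (⟨i, hiklt⟩ : Fin (k-1)))) (Sum.inr (Sum.inr j))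
            = H.dist (Sum.inr (Sum.inl (⟨i-1, hbl⟩ : Fin (k-1)))) (Sum.inr (Sum.inr j)) + 1 := by
          rw [hH, dist_P_U' G' w (k-1) k _ j, dist_P_U' G' w (k-1) k _ j]
          dsimp only
          omega
        rw [e]; push_cast; ring
      have hB : ∑ j : Fin (k-1), ((H.dist (Sum.inr (Sum.inl ⟨i, hiklt⟩)) (Sum.inr (Sum.inl j)) : ℝ)
            - (H.dist (Sum.inr (Sum.inl ⟨i-1, hbl⟩)) (Sum.inr (Sum.inl j)) : ℝ)) * X (Sum.inr (Sum.inl j))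
          = ∑ t ∈ Finset.Ico 1 k, (if t < i + 1 then 1 else -1) * v t := by
        rw [Ico_shift k (fun t => (if t < i + 1 then 1 else -1) * v t)]
        refine Finset.sum_congr rfl fun j _ => ?_
        rw [hv_eq j]
        by_cases hji : (j : ℕ) < i
        · rw [if_pos (by omega)]
          have e : H.dist (Sum.inr (Sum.inl (⟨i, hiklt⟩ : Fin (k-1)))) (Sum.inr (Sum.inl j))
              = H.dist (Sum.inr (Sum.inl (⟨i-1, hbl⟩ : Fin (k-1)))) (Sum.inr (Sum.inl j)) + 1 := by
            rw [hH, dist_P_P'' G' w (k-1) k _ j, dist_P_P'' G' w (k-1) k _ j]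
            dsimp only
            split_ifs <;> omega
          rw [e]; push_cast; ring
        · rw [if_neg (by omega)]
          have e : H.dist (Sum.inr (Sum.inl (⟨i-1, hbl⟩ : Fin (k-1)))) (Sum.inr (Sum.inl j))
              = H.dist (Sum.inr (Sum.inl (⟨i, hiklt⟩ : Fin (k-1)))) (Sum.inr (Sum.inl j)) + 1 := by
            rw [hH, dist_P_P'' G' w (k-1) k _ j, dist_P_P'' G' w (k-1) k _ j]
            dsimp only
            split_ifs <;> omega
          rw [e]; push_cast; ring
      rw [hXa, hXb, hA, hB, hC] at hd
      have hsigned := signed_split 1 (i+1) k (by omega) (by omega) v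
      linarith [hd, hVsum, hPsum, hUsum, hsigned]
  obtain ⟨mono_u, mono_v⟩ := key_aux hk hρpos hRpos hu_pos hv_pos rfl hIU hIV hAnc
  have chainU : ∀ a b : ℕ, b < k → a < b → u a < u b := by
    intro a b hbk hab
    induction b with
    | zero => omega
    | succ n ih =>
      rcases Nat.lt_succ_iff_lt_or_eq.mp hab with h | rfl
      · exact lt_trans (ih (by omega) h) (mono_u n hbk)
      · exact mono_u a hbk
  have chainV : ∀ a b : ℕ, b < k → a < b → v a < v b := by
    intro a b hbk hab
    induction b with
    | zero => omega
    | succ n ih =>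
      rcases Nat.lt_succ_iff_lt_or_eq.mp hab with h | rfl
      · exact lt_trans (ih (by omega) h) (mono_v n hbk)
      · exact mono_v a hbk
  have eU : ∀ i : Fin k, X (armU w k i) = u (i : ℕ) := by
    intro i
    simp only [armU]
    exact (hu_eq i).symm
  have eV : ∀ i : Fin k, X (armV w k i) = v (i : ℕ) := by
    intro i
    by_cases h0 : (i : ℕ) = 0
    · simp only [armV]
      rw [dif_pos h0, h0, hv0]
    · simp only [armV, dif_neg h0]
      exact (hv_eq' (i : ℕ) h0 (by have := i.isLt; omega)).symm
  intro i j hij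
  have hij' : (i : ℕ) < (j : ℕ) := hij
  refine ⟨?_, ?_⟩
  · rw [eU i, eU j]
    exact chainU _ _ j.isLt hij'
  · rw [eV i, eV j]
    exact chainV _ _ j.isLt hij'
end
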